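/- arXiv:1303.1366 — 13 statements merged into one kernel-verified Lean document; each statement's English description precedes it below -/
import Mathlib

section
/- Let M be a submonoid of the free monoid FreeMonoid A. Suppose that every element w ≠ 1 of M has a unique factorization w = x·y with x irreducible in M and y ∈ M (uniqueness meaning: if w = x·y = x'·y' with x, x' irreducible in M and y, y' ∈ M, then x = x' and y = y'). Then M is free. -/
/-- An element `x` is irreducible in a submonoid `M` of a free monoid: it lies in `M`,
is not the identity, and cannot be written as a product of two non-identity
elements of `M`. -/
def IsIrreducibleIn {A : Type*} (M : Submonoid (FreeMonoid A)) (x : FreeMonoid A) : Prop :=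
  x ∈ M ∧ x ≠ 1 ∧ ∀ y z : FreeMonoid A, y ∈ M → z ∈ M → y ≠ 1 → z ≠ 1 → x ≠ y * z

theorem free_of_unique_irreducible_prefix_factorization
    {A : Type u} (M : Submonoid (FreeMonoid A))
    (h : ∀ w ∈ M, w ≠ 1 →
      ∃! p : FreeMonoid A × FreeMonoid A,
        IsIrreducibleIn M p.1 ∧ p.2 ∈ M ∧ w = p.1 * p.2) :
    ∃ B : Type u, Nonempty (M ≃* FreeMonoid B) := by
  set B := {x : FreeMonoid A // IsIrreducibleIn M x} with hB
  refine ⟨B, ⟨?_⟩⟩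
  set φ : FreeMonoid B →* M := FreeMonoid.lift (fun b => (⟨b.1, b.2.1⟩ : M)) with hφ
  have key : ∀ l : List B, ((φ (FreeMonoid.ofList l) : M) : FreeMonoid A) =
      FreeMonoid.ofList (l.map Subtype.val).flatten := by
    intro l
    induction l with
    | nil => rfl
    | cons b t ih =>
      rw [FreeMonoid.ofList_cons, map_mul]
      push_cast
      rw [ih]
      simp [FreeMonoid.lift_eval_of]
      rfl
  -- length fact
  have hne : ∀ (b : B) (t : List B), (φ (FreeMonoid.ofList (b :: t)) : FreeMonoid A) ≠ 1 := by
    intro b t hone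
    rw [key] at hone
    have h2 : ((b :: t).map Subtype.val).flatten = ([] : List A) :=
      congrArg FreeMonoid.toList hone
    have h3 : FreeMonoid.toList b.1 ++ (t.map (fun x => FreeMonoid.toList x.1)).flatten = [] := h2
    have hb1 : FreeMonoid.toList b.1 = [] := (List.append_eq_nil_iff.mp h3).1
    exact b.2.2.1 (FreeMonoid.toList.injective hb1)
  have hinj : Function.Injective φ := by
    have : ∀ l l' : List B, φ (FreeMonoid.ofList l) = φ (FreeMonoid.ofList l') → l = l' := by
      intro l
      induction l with
      | nil =>
        intro l' hll'
        cases l' with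
        | nil => rfl
        | cons b t =>
          exact absurd (congrArg Subtype.val hll'.symm) (hne b t)
      | cons b t ih =>
        intro l' hll'
        cases l' with
        | nil => exact absurd (congrArg Subtype.val hll') (hne b t)
        | cons b' t' =>
          set w : FreeMonoid A := ((φ (FreeMonoid.ofList (b :: t)) : M) : FreeMonoid A) with hw
          have hwM : w ∈ M := (φ (FreeMonoid.ofList (b :: t))).2
          have hwne : w ≠ 1 := hne b t
          obtain ⟨p, _, hpu⟩ := h w hwM hwne
          have e1 : (w : FreeMonoid A) = b.1 * (φ (FreeMonoid.ofList t) : FreeMonoid A) := by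
            show ((φ (FreeMonoid.ofList (b :: t)) : M) : FreeMonoid A) = _
            rw [FreeMonoid.ofList_cons, map_mul]
            push_cast
            simp [hφ, FreeMonoid.lift_eval_of]
          have e2 : (w : FreeMonoid A) = b'.1 * (φ (FreeMonoid.ofList t') : FreeMonoid A) := by
            show ((φ (FreeMonoid.ofList (b :: t)) : M) : FreeMonoid A) = _
            rw [hll', FreeMonoid.ofList_cons, map_mul]
            push_cast
            simp [hφ, FreeMonoid.lift_eval_of]
          have h1 := hpu (b.1, (φ (FreeMonoid.ofList t) : FreeMonoid A))
            ⟨b.2, (φ (FreeMonoid.ofList t)).2, e1⟩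
          have h2 := hpu (b'.1, (φ (FreeMonoid.ofList t') : FreeMonoid A))
            ⟨b'.2, (φ (FreeMonoid.ofList t')).2, e2⟩
          have heq := h1.trans h2.symm
          have hbb : b = b' := Subtype.ext (congrArg Prod.fst heq)
          have htt : φ (FreeMonoid.ofList t) = φ (FreeMonoid.ofList t') :=
            Subtype.ext (congrArg Prod.snd heq)
          rw [hbb, ih t' htt]
    intro x y hxy
    exact this x.toList y.toList hxy
  have hsurj : Function.Surjective φ := by
    suffices H : ∀ (n : ℕ) (w : FreeMonoid A), w.length ≤ n → ∀ hw : w ∈ M,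
        ∃ l, φ l = ⟨w, hw⟩ by
      rintro ⟨w, hwM⟩
      exact H w.length w le_rfl hwM
    intro n
    induction n with
    | zero =>
      intro w hlen hw
      have hw1 : w = 1 := FreeMonoid.length_eq_zero.mp (Nat.le_zero.mp hlen)
      subst hw1
      exact ⟨1, Subtype.ext (by simp)⟩
    | succ n ih =>
      intro w hlen hw
      by_cases hw1 : w = 1
      · subst hw1
        exact ⟨1, Subtype.ext (by simp)⟩
      · obtain ⟨⟨x, y⟩, ⟨hxirr, hyM, hxy⟩, -⟩ := h w hw hw1
        have hxlen : 1 ≤ x.length := by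
          rcases Nat.eq_zero_or_pos x.length with h0 | h1
          · exact absurd (FreeMonoid.length_eq_zero.mp h0) hxirr.2.1
          · exact h1
        have hylen : y.length ≤ n := by
          have := FreeMonoid.length_mul x y
          rw [← hxy] at this
          omega
        obtain ⟨l, hl⟩ := ih y hylen hyM
        refine ⟨FreeMonoid.of (⟨x, hxirr⟩ : B) * l, ?_⟩
        rw [map_mul, hl]
        exact Subtype.ext (by simp [hφ, FreeMonoid.lift_eval_of, hxy])
  exact (MulEquiv.ofBijective φ ⟨hinj, hsurj⟩).symm
end

section
/- (Schützenberger's criterion) Let M be a submonoid of the free monoid FreeMonoid A. Then M is free if and only if for all words p, q, r ∈ FreeMonoid A, whenever p ∈ M, p·q ∈ M, q·r ∈ M, and r ∈ M, it follows that q ∈ M. -/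
open FreeMonoid

/-- Schützenberger's criterion: a submonoid of a free monoid is free if and only if
whenever `p`, `p * q`, `q * r`, and `r` all lie in `M`, so does `q`. -/
theorem schutzenberger_criterion {A : Type u} (M : Submonoid (FreeMonoid A)) :
    (∃ B : Type u, Nonempty (M ≃* FreeMonoid B)) ↔
      (∀ p q r : FreeMonoid A, p ∈ M → p * q ∈ M → q * r ∈ M → r ∈ M → q ∈ M) := by
  constructor
  · rintro ⟨B, ⟨e⟩⟩ p q r hp hpq hqr hr
    have hassoc : (⟨p, hp⟩ : M) * ⟨q * r, hqr⟩ = (⟨p * q, hpq⟩ : M) * ⟨r, hr⟩ := by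
      ext
      simp [mul_assoc]
    have h := congrArg (fun x : M => FreeMonoid.toList (e x)) hassoc
    simp only [map_mul, FreeMonoid.toList_mul] at h
    rcases List.append_eq_append_iff.mp h with ⟨w, h1, h2⟩ | ⟨w, h1, h2⟩
    · -- e ⟨p*q⟩ = e ⟨p⟩ * ofList w
      have h1' : e ⟨p * q, hpq⟩ = e ⟨p, hp⟩ * FreeMonoid.ofList w := by
        apply FreeMonoid.toList.injective
        simpa [FreeMonoid.toList_mul] using h1
      set m : M := e.symm (FreeMonoid.ofList w) with hm
      have : (⟨p, hp⟩ : M) * m = ⟨p * q, hpq⟩ := by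
        apply e.injective
        simp [h1', hm, map_mul]
      have hval : p * (m : FreeMonoid A) = p * q := congrArg Subtype.val this
      have : (m : FreeMonoid A) = q := mul_left_cancel hval
      rw [← this]
      exact m.2
    · -- e ⟨p⟩ = e ⟨p*q⟩ * ofList w
      have h1' : e ⟨p, hp⟩ = e ⟨p * q, hpq⟩ * FreeMonoid.ofList w := by
        apply FreeMonoid.toList.injective
        simpa [FreeMonoid.toList_mul] using h1
      set m : M := e.symm (FreeMonoid.ofList w) with hm
      have : (⟨p * q, hpq⟩ : M) * m = ⟨p, hp⟩ := by
        apply e.injective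
        simp [h1', hm, map_mul]
      have hval : p * q * (m : FreeMonoid A) = p := congrArg Subtype.val this
      have hq1 : q * (m : FreeMonoid A) = 1 := by
        have : p * (q * (m : FreeMonoid A)) = p * 1 := by
          rw [mul_one, ← mul_assoc, hval]
        exact mul_left_cancel this
      have : q = 1 := by
        have := congrArg FreeMonoid.toList hq1
        simp only [FreeMonoid.toList_mul, FreeMonoid.toList_one,
          List.append_eq_nil_iff] at this
        apply FreeMonoid.toList.injective
        simp [this.1]
      rw [this]; exact M.one_mem
  · intro H
    classical
    -- the set of indecomposable nontrivial elements of M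
    set P : FreeMonoid A → Prop := fun x => x ∈ M ∧ x ≠ 1 ∧
      ∀ u v, u ∈ M → v ∈ M → x = u * v → u = 1 ∨ v = 1 with hP
    refine ⟨{x : FreeMonoid A // P x}, ⟨?_⟩⟩
    set B := {x : FreeMonoid A // P x} with hB
    set Q : List B → FreeMonoid A := fun l => (l.map Subtype.val).prod with hQ
    have Qnil : Q [] = 1 := rfl
    have Qcons : ∀ (b : B) (l : List B), Q (b :: l) = b.val * Q l := by
      intro b l
      show (List.map Subtype.val (b :: l)).prod = _
      rw [List.map_cons, List.prod_cons]
    have Qmem : ∀ l : List B, Q l ∈ M := by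
      intro l
      induction l with
      | nil => exact M.one_mem
      | cons b t ih => rw [Qcons]; exact M.mul_mem b.2.1 ih
    -- injectivity on lists
    have aux : ∀ (x y : B) (s t : FreeMonoid A), s ∈ M → t ∈ M →
        x.val * s = y.val * t → (∃ c, FreeMonoid.toList y.val = FreeMonoid.toList x.val ++ c) →
        x = y := by
      rintro x y s t hs ht heq ⟨c, hc⟩
      have hyx : y.val = x.val * FreeMonoid.ofList c := by
        apply FreeMonoid.toList.injective
        simpa [FreeMonoid.toList_mul] using hc
      have hst : FreeMonoid.ofList c * t = s := by
        have := heq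
        rw [hyx, mul_assoc] at this
        exact (mul_left_cancel this).symm
      have hcM : FreeMonoid.ofList c ∈ M := by
        refine H x.val (FreeMonoid.ofList c) t x.2.1 ?_ ?_ ht
        · rw [← hyx]; exact y.2.1
        · rw [hst]; exact hs
      rcases y.2.2.2 x.val (FreeMonoid.ofList c) x.2.1 hcM hyx with h1 | h1
      · exact absurd h1 x.2.2.1
      · apply Subtype.ext
        rw [hyx, h1, mul_one]
    have Qinj : ∀ l₁ l₂ : List B, Q l₁ = Q l₂ → l₁ = l₂ := by
      intro l₁
      induction l₁ with
      | nil =>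
        intro l₂ h
        cases l₂ with
        | nil => rfl
        | cons b t =>
          exfalso
          rw [Qnil, Qcons] at h
          have := congrArg FreeMonoid.toList h.symm
          simp only [FreeMonoid.toList_mul, FreeMonoid.toList_one,
            List.append_eq_nil_iff] at this
          exact b.2.2.1 (FreeMonoid.toList.injective (by simp [this.1]))
      | cons x t₁ ih =>
        intro l₂ h
        cases l₂ with
        | nil =>
          exfalso
          rw [Qnil, Qcons] at h
          have := congrArg FreeMonoid.toList h
          simp only [FreeMonoid.toList_mul, FreeMonoid.toList_one,
            List.append_eq_nil_iff] at this
          exact x.2.2.1 (FreeMonoid.toList.injective (by simp [this.1]))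
        | cons y t₂ =>
          rw [Qcons, Qcons] at h
          have hxy : x = y := by
            have h' := congrArg FreeMonoid.toList h
            simp only [FreeMonoid.toList_mul] at h'
            rcases List.append_eq_append_iff.mp h' with ⟨w, h1, h2⟩ | ⟨w, h1, h2⟩
            · exact aux x y (Q t₁) (Q t₂) (Qmem t₁) (Qmem t₂) h ⟨w, h1⟩
            · exact (aux y x (Q t₂) (Q t₁) (Qmem t₂) (Qmem t₁) h.symm ⟨w, h1⟩).symm
          subst hxy
          have : Q t₁ = Q t₂ := mul_left_cancel h
          rw [ih t₂ this]
    -- surjectivity: every element of M factors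
    have Qsurj : ∀ m : FreeMonoid A, m ∈ M → ∃ l : List B, Q l = m := by
      have key : ∀ n : ℕ, ∀ m : FreeMonoid A, (FreeMonoid.toList m).length ≤ n →
          m ∈ M → ∃ l : List B, Q l = m := by
        intro n
        induction n with
        | zero =>
          intro m hlen _
          refine ⟨[], ?_⟩
          rw [Qnil]
          apply (FreeMonoid.toList.injective ?_).symm
          simpa using List.length_eq_zero_iff.mp (Nat.le_zero.mp hlen)
        | succ n ih =>
          intro m hlen hm
          by_cases h1 : m = 1
          · exact ⟨[], by rw [Qnil, h1]⟩
          by_cases h2 : ∀ u v, u ∈ M → v ∈ M → m = u * v → u = 1 ∨ v = 1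
          · refine ⟨[⟨m, hm, h1, h2⟩], ?_⟩
            rw [Qcons, Qnil, mul_one]
          · push_neg at h2
            obtain ⟨u, v, hu, hv, huv, hu1, hv1⟩ := h2
            have hul : (FreeMonoid.toList u).length ≤ n := by
              have hlen' := congrArg (fun x => (FreeMonoid.toList x).length) huv
              simp only [FreeMonoid.toList_mul, List.length_append] at hlen'
              have hv0 : 0 < (FreeMonoid.toList v).length := by
                rcases Nat.eq_zero_or_pos (FreeMonoid.toList v).length with h | h
                · exact absurd (FreeMonoid.toList.injective
                    (by simpa using List.length_eq_zero_iff.mp h)) hv1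
                · exact h
              omega
            have hvl : (FreeMonoid.toList v).length ≤ n := by
              have hlen' := congrArg (fun x => (FreeMonoid.toList x).length) huv
              simp only [FreeMonoid.toList_mul, List.length_append] at hlen'
              have hu0 : 0 < (FreeMonoid.toList u).length := by
                rcases Nat.eq_zero_or_pos (FreeMonoid.toList u).length with h | h
                · exact absurd (FreeMonoid.toList.injective
                    (by simpa using List.length_eq_zero_iff.mp h)) hu1
                · exact h
              omega
            obtain ⟨lu, hlu⟩ := ih u hul hu
            obtain ⟨lv, hlv⟩ := ih v hvl hv
            refine ⟨lu ++ lv, ?_⟩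
            rw [huv, ← hlu, ← hlv]
            show (List.map Subtype.val (lu ++ lv)).prod = _
      
            rw [List.map_append, List.prod_append]
      intro m hm
      exact key (FreeMonoid.toList m).length m le_rfl hm
    -- assemble the equivalence
    let f : FreeMonoid B →* M := FreeMonoid.lift (fun b : B => (⟨b.1, b.2.1⟩ : M))
    have hfval : ∀ x : FreeMonoid B, (f x : FreeMonoid A) = Q (FreeMonoid.toList x) := by
      intro x
      rw [show f x = FreeMonoid.lift (fun b : B => (⟨b.1, b.2.1⟩ : M)) x from rfl,
        FreeMonoid.lift_apply]
      induction FreeMonoid.toList x with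
      | nil => rfl
      | cons b t ihh =>
        simp only [List.map_cons, List.prod_cons, Qcons, Submonoid.coe_mul, ihh]
    have hbij : Function.Bijective f := by
      constructor
      · intro x y hxy
        have : Q (FreeMonoid.toList x) = Q (FreeMonoid.toList y) := by
          rw [← hfval, ← hfval, hxy]
        exact FreeMonoid.toList.injective (Qinj _ _ this)
      · intro m
        obtain ⟨l, hl⟩ := Qsurj m.val m.2
        refine ⟨FreeMonoid.ofList l, ?_⟩
        apply Subtype.ext
        rw [hfval, FreeMonoid.toList_ofList, hl]
    exact (MulEquiv.ofBijective f hbij).symm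
end

section
/- Let w be a nonempty word in FreeMonoid A, and let A_w be the submonoid of FreeMonoid A consisting of the empty word together with all words having w as a prefix. Then A_w is free if and only if w is non-overlapping. -/
/-- The submonoid of a free monoid consisting of the empty word together with all
words having `w` as a prefix. -/
def prefixSubmonoid {A : Type*} (w : FreeMonoid A) : Submonoid (FreeMonoid A) where
  carrier := {u | u = 1 ∨ w.toList <+: u.toList}
  one_mem' := Or.inl rfl
  mul_mem' := by
    rintro a b (rfl | ha) hb
    · simpa using hb
    · right
      exact ha.trans (by rw [FreeMonoid.toList_mul]; exact List.prefix_append _ _)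

/-- A word `w` overlaps with itself if `w * x = y * w` for some words `x, y` with
`0 < length y < length w`. -/
def SelfOverlapping {A : Type*} (w : FreeMonoid A) : Prop :=
  ∃ x y : FreeMonoid A, w * x = y * w ∧ 0 < y.length ∧ y.length < w.length

namespace PrefixFree

variable {A : Type*}

lemma length_eq {u : FreeMonoid A} : u.length = u.toList.length := rfl

/-- Two occurrences of `L` at distance `p < L.length` force a self-overlap. -/
lemma overlap_of_two_occ {L u : List A} (h0 : L <+: u) {p : ℕ} (hp : 0 < p)
    (hpl : p < L.length) (h1 : L <+: u.drop p) : SelfOverlapping (FreeMonoid.ofList L) := by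
  refine ⟨FreeMonoid.ofList ((u.take (p + L.length)).drop L.length),
    FreeMonoid.ofList (u.take p), ?_, ?_, ?_⟩
  · have key : L ++ (u.take (p + L.length)).drop L.length = u.take p ++ L := by
      have h2 : (u.take (p + L.length)).take L.length = L := by
        rw [List.take_take, min_eq_left (by omega)]
        obtain ⟨r, hr⟩ := h0
        rw [← hr, List.take_append, List.take_length,
          Nat.sub_self, List.take_zero, List.append_nil]
      have h3 : u.take (p + L.length) = u.take p ++ L := by
        rw [List.take_add]
        congr 1
        obtain ⟨r, hr⟩ := h1
        rw [← hr, List.take_append, List.take_length,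
          Nat.sub_self, List.take_zero, List.append_nil]
      calc L ++ (u.take (p + L.length)).drop L.length
          = (u.take (p + L.length)).take L.length ++ (u.take (p + L.length)).drop L.length := by
            rw [h2]
        _ = u.take (p + L.length) := List.take_append_drop _ _
        _ = u.take p ++ L := h3
    apply FreeMonoid.toList.injective
    simpa [FreeMonoid.toList_mul] using key
  · have hpu : p ≤ u.length := by
      have := h1.length_le
      rw [List.length_drop] at this
      omega
    have : (u.take p).length = p := by rw [List.length_take]; omega
    simpa [length_eq, this] using hp
  · have hpu : p ≤ u.length := by
      have := h1.length_le
      rw [List.length_drop] at this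
      omega
    have : (u.take p).length = p := by rw [List.length_take]; omega
    simpa [length_eq, this] using hpl

/-- A block: a word starting with `L` that contains no other occurrence of `L`. -/
def IsBlock (L u : List A) : Prop :=
  L <+: u ∧ ∀ p, 0 < p → ¬ L <+: u.drop p

lemma prefix_of_prefix_append {L x y : List A} (h : L <+: x ++ y)
    (hl : L.length ≤ x.length) : L <+: x := by
  have := List.prefix_take_iff.2 ⟨h, hl⟩
  rwa [List.take_left] at this

lemma first_block_eq_aux {L : List A} (hno : ¬ SelfOverlapping (FreeMonoid.ofList L))
    (hL : L ≠ []) {b c s t : List A} (hb : IsBlock L b) (hc : IsBlock L c)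
    (hs : s = [] ∨ L <+: s) (ht : t = [] ∨ L <+: t)
    (h : b ++ s = c ++ t) (hbc : b.length ≤ c.length) : b = c := by
  have hL0 : 0 < L.length := List.length_pos_iff.2 hL
  have hbpre : b <+: c := by
    exact List.prefix_of_prefix_length_le (h ▸ List.prefix_append b s)
      (List.prefix_append c t) hbc
  rcases Nat.eq_or_lt_of_le hbc with heq | hlt
  · exact hbpre.eq_of_length heq
  · exfalso
    have hlen : b.length + s.length = c.length + t.length := by
      have := congrArg List.length h
      simpa using this
    have hsne : s ≠ [] := by
      intro hsnil
      subst hsnil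
      simp at hlen
      omega
    have hLs : L <+: s := hs.resolve_left hsne
    have hocc : L <+: (c ++ t).drop b.length := by
      rw [← h, List.drop_append_of_le_length le_rfl, List.drop_length, List.nil_append]
      exact hLs
    rw [List.drop_append_of_le_length (le_of_lt hlt)] at hocc
    by_cases hcase : b.length + L.length ≤ c.length
    · have : L <+: c.drop b.length := by
        apply prefix_of_prefix_append hocc
        rw [List.length_drop]; omega
      exact hc.2 b.length (by have := hb.1.length_le; omega) this
    · -- overlap case
      have htne : t ≠ [] := by
        intro htnil
        have h2 := hocc.length_le
        rw [htnil, List.append_nil, List.length_drop] at h2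
        omega
      have hLt : L <+: t := ht.resolve_left htne
      have hq : (c.drop b.length ++ t).drop (c.length - b.length) = t := by
        rw [List.drop_append_of_le_length (by rw [List.length_drop]),
          List.drop_drop]
        have he : b.length + (c.length - b.length) = c.length := by omega
        rw [he, List.drop_length, List.nil_append]
      refine hno (overlap_of_two_occ hocc (p := c.length - b.length) (by omega) (by omega) ?_)
      rw [hq]
      exact hLt

lemma first_block_eq {L : List A} (hno : ¬ SelfOverlapping (FreeMonoid.ofList L))
    (hL : L ≠ []) {b c s t : List A} (hb : IsBlock L b) (hc : IsBlock L c)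
    (hs : s = [] ∨ L <+: s) (ht : t = [] ∨ L <+: t)
    (h : b ++ s = c ++ t) : b = c := by
  rcases le_total b.length c.length with h' | h'
  · exact first_block_eq_aux hno hL hb hc hs ht h h'
  · exact (first_block_eq_aux hno hL hc hb ht hs h.symm h').symm

lemma flatten_eq_nil_or_prefix {L : List A} (l : List (List A))
    (h : ∀ u ∈ l, IsBlock L u) : l.flatten = [] ∨ L <+: l.flatten := by
  cases l with
  | nil => exact Or.inl rfl
  | cons b l =>
      right
      rw [List.flatten_cons]
      exact ((h b (by simp)).1).trans (List.prefix_append _ _)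

lemma flatten_inj {L : List A} (hno : ¬ SelfOverlapping (FreeMonoid.ofList L))
    (hL : L ≠ []) : ∀ l m : List (List A), (∀ u ∈ l, IsBlock L u) → (∀ u ∈ m, IsBlock L u) →
    l.flatten = m.flatten → l = m := by
  intro l
  induction l with
  | nil =>
      intro m _ hm h
      cases m with
      | nil => rfl
      | cons c m =>
          exfalso
          rw [List.flatten_nil, List.flatten_cons] at h
          have hcne : c ≠ [] := fun hc => hL (List.prefix_nil.1 (hc ▸ (hm c (by simp)).1))
          exact hcne (List.append_eq_nil_iff.1 h.symm).1
  | cons b l ih =>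
      intro m hl hm h
      cases m with
      | nil =>
          exfalso
          rw [List.flatten_nil, List.flatten_cons] at h
          have hbne : b ≠ [] := fun hc => hL (List.prefix_nil.1 (hc ▸ (hl b (by simp)).1))
          exact hbne (List.append_eq_nil_iff.1 h).1
      | cons c m =>
          rw [List.flatten_cons, List.flatten_cons] at h
          have hbc : b = c :=
            first_block_eq hno hL (hl b (by simp)) (hm c (by simp))
              (flatten_eq_nil_or_prefix l (fun u hu => hl u (by simp [hu])))
              (flatten_eq_nil_or_prefix m (fun u hu => hm u (by simp [hu]))) h
          subst hbc
          have : l.flatten = m.flatten := by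
            exact (List.append_right_inj b).1 h
          rw [ih m (fun u hu => hl u (by simp [hu])) (fun u hu => hm u (by simp [hu])) this]

lemma mem_closure {L : List A} (hno : ¬ SelfOverlapping (FreeMonoid.ofList L))
    (hL : L ≠ []) : ∀ n (u : List A), u.length ≤ n → L <+: u →
    FreeMonoid.ofList u ∈ Submonoid.closure {v : FreeMonoid A | IsBlock L v.toList} := by
  intro n
  induction n with
  | zero =>
      intro u hu hpre
      exfalso
      have : u = [] := List.length_eq_zero_iff.1 (Nat.le_zero.1 hu)
      exact hL (List.prefix_nil.1 (this ▸ hpre))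
  | succ n ih =>
      intro u hlen hpre
      classical
      have hL0 : 0 < L.length := List.length_pos_iff.2 hL
      by_cases hblock : ∀ p, 0 < p → ¬ L <+: u.drop p
      · exact Submonoid.subset_closure (by simpa [IsBlock] using And.intro hpre hblock)
      · push_neg at hblock
        obtain ⟨p₀, hp₀, hocc₀⟩ := hblock
        have hex : ∃ p, 0 < p ∧ L <+: u.drop p := ⟨p₀, hp₀, hocc₀⟩
        set p := Nat.find hex with hpdef
        have hp := Nat.find_spec hex
        have hmin : ∀ q, q < p → ¬(0 < q ∧ L <+: u.drop q) := fun q hq => Nat.find_min hex hq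
        have hLp : L.length ≤ p := by
          by_contra hcon
          push_neg at hcon
          exact hno (overlap_of_two_occ hpre hp.1 hcon hp.2)
        have hpu : p < u.length := by
          have := hp.2.length_le
          rw [List.length_drop] at this
          omega
        have ha : IsBlock L (u.take p) := by
          constructor
          · exact List.prefix_take_iff.2 ⟨hpre, hLp⟩
          · intro q hq hocc
            have hqlen := hocc.length_le
            rw [List.length_drop, List.length_take] at hqlen
            have hqp : q < p := by omega
            have hpre' : L <+: u.drop q := by
              refine hocc.trans ?_
              rw [List.drop_take]
              exact List.take_prefix _ _
            exact hmin q hqp ⟨hq, hpre'⟩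
        have hrec := ih (u.drop p) (by rw [List.length_drop]; omega) hp.2
        have hsplit : FreeMonoid.ofList u
            = FreeMonoid.ofList (u.take p) * FreeMonoid.ofList (u.drop p) := by
          apply FreeMonoid.toList.injective
          simp [FreeMonoid.toList_mul]
        rw [hsplit]
        exact mul_mem (Submonoid.subset_closure (by simpa using ha)) hrec

end PrefixFree

theorem prefixSubmonoid_free_iff_nonoverlapping {A : Type u}
    (w : FreeMonoid A) (hw : w ≠ 1) :
    (∃ B : Type u, Nonempty (prefixSubmonoid w ≃* FreeMonoid B)) ↔
      ¬ SelfOverlapping w := by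
  constructor
  · rintro ⟨B, ⟨e⟩⟩ ⟨x, y, hxy, hy0, hyw⟩
    have hwmem : w ∈ prefixSubmonoid w := Or.inr (List.prefix_refl _)
    have hwx : w * x ∈ prefixSubmonoid w := Or.inr
      (by rw [FreeMonoid.toList_mul]; exact List.prefix_append _ _)
    have hwy : w * y ∈ prefixSubmonoid w := Or.inr
      (by rw [FreeMonoid.toList_mul]; exact List.prefix_append _ _)
    set W : prefixSubmonoid w := ⟨w, hwmem⟩
    set Wx : prefixSubmonoid w := ⟨w * x, hwx⟩
    set Wy : prefixSubmonoid w := ⟨w * y, hwy⟩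
    have key : W * Wx = Wy * W := by
      apply Subtype.ext
      show w * (w * x) = (w * y) * w
      rw [hxy, mul_assoc]
    have key2 : e W * e Wx = e Wy * e W := by rw [← map_mul, ← map_mul, key]
    have hlist : (e W).toList ++ (e Wx).toList = (e Wy).toList ++ (e W).toList := by
      rw [← FreeMonoid.toList_mul, ← FreeMonoid.toList_mul, key2]
    rcases List.append_eq_append_iff.1 hlist with ⟨a', h1, _⟩ | ⟨c', h1, _⟩
    · -- (e Wy).toList = (e W).toList ++ a'
      set s : prefixSubmonoid w := e.symm (FreeMonoid.ofList a')
      have hWy : Wy = W * s := by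
        apply e.injective
        rw [map_mul]
        have : e s = FreeMonoid.ofList a' := e.apply_symm_apply _
        rw [this]
        apply FreeMonoid.toList.injective
        rw [FreeMonoid.toList_mul, FreeMonoid.toList_ofList, h1]
      have hval : w * y = w * (s : FreeMonoid A) := congrArg Subtype.val hWy
      have hy : y = (s : FreeMonoid A) := by
        apply FreeMonoid.toList.injective
        have := congrArg FreeMonoid.toList hval
        rw [FreeMonoid.toList_mul, FreeMonoid.toList_mul] at this
        exact List.append_cancel_left this
      rcases s.2 with hs1 | hs2
      · rw [hy, hs1] at hy0
        simp [PrefixFree.length_eq, FreeMonoid.toList_one] at hy0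
      · have := hs2.length_le
        rw [← hy] at this
        have h1 : w.length = w.toList.length := rfl
        have h2 : y.length = y.toList.length := rfl
        omega
    · -- (e W).toList = (e Wy).toList ++ c'
      set s : prefixSubmonoid w := e.symm (FreeMonoid.ofList c')
      have hW : W = Wy * s := by
        apply e.injective
        rw [map_mul]
        have : e s = FreeMonoid.ofList c' := e.apply_symm_apply _
        rw [this]
        apply FreeMonoid.toList.injective
        rw [FreeMonoid.toList_mul, FreeMonoid.toList_ofList, h1]
      have hval : w = (w * y) * (s : FreeMonoid A) := congrArg Subtype.val hW
      have := congrArg FreeMonoid.toList hval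
      rw [FreeMonoid.toList_mul, FreeMonoid.toList_mul] at this
      have hlen := congrArg List.length this
      rw [List.length_append, List.length_append] at hlen
      have h2 : y.length = y.toList.length := rfl
      omega
  · intro hno
    have hL : w.toList ≠ [] := by
      intro h
      exact hw (FreeMonoid.toList.injective (by simpa using h))
    have hno' : ¬ SelfOverlapping (FreeMonoid.ofList w.toList) := by
      rwa [FreeMonoid.ofList_toList]
    set S : Set (FreeMonoid A) := {v | PrefixFree.IsBlock w.toList v.toList} with hS
    let φ : FreeMonoid ↥S →* FreeMonoid A := FreeMonoid.lift Subtype.val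
    have hrange : MonoidHom.mrange φ = prefixSubmonoid w := by
      rw [show φ = FreeMonoid.lift Subtype.val from rfl, FreeMonoid.mrange_lift,
        Subtype.range_val]
      apply le_antisymm
      · exact Submonoid.closure_le.2 (fun v hv => Or.inr hv.1)
      · intro x hx
        obtain rfl | hpre := hx
        · exact one_mem _
        · have := PrefixFree.mem_closure hno' hL x.toList.length x.toList le_rfl hpre
          rwa [FreeMonoid.ofList_toList] at this
    have hφtoList : ∀ z : FreeMonoid ↥S,
        (φ z).toList = (z.toList.map (fun b : ↥S => (b : FreeMonoid A).toList)).flatten := by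
      intro z
      rw [show φ z = (FreeMonoid.lift Subtype.val) z from rfl, FreeMonoid.lift_apply,
        FreeMonoid.toList_prod, List.map_map]
      rfl
    have hinj : Function.Injective φ := by
      intro a b hab
      have h1 := hφtoList a
      have h2 := hφtoList b
      rw [hab, h2] at h1
      have hmem : ∀ (z : FreeMonoid ↥S) (u : List A),
          u ∈ z.toList.map (fun b : ↥S => (b : FreeMonoid A).toList) →
          PrefixFree.IsBlock w.toList u := by
        intro z u hu
        rw [List.mem_map] at hu
        obtain ⟨b, _, rfl⟩ := hu
        exact b.2
      have := PrefixFree.flatten_inj hno' hL _ _ (hmem b) (hmem a) h1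
      have hfi : Function.Injective (fun b : ↥S => (b : FreeMonoid A).toList) :=
        fun b c h => Subtype.ext (FreeMonoid.toList.injective h)
      have : b.toList = a.toList := List.map_injective_iff.2 hfi this
      exact (FreeMonoid.toList.injective this).symm
    let ψ : FreeMonoid ↥S →* prefixSubmonoid w :=
      φ.codRestrict _ (fun x => by rw [← hrange]; exact ⟨x, rfl⟩)
    have hbij : Function.Bijective ψ := by
      constructor
      · intro a b h
        exact hinj (congrArg Subtype.val h)
      · intro y
        have hy : (y : FreeMonoid A) ∈ MonoidHom.mrange φ := by rw [hrange]; exact y.2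
        obtain ⟨x, hx⟩ := hy
        exact ⟨x, Subtype.ext hx⟩
    exact ⟨↥S, ⟨(MulEquiv.ofBijective ψ hbij).symm⟩⟩
end

section
/- Let A be a type, let w : A → ℕ satisfy w(a) > 0 for all a ∈ A, and let ω : FreeMonoid A → ℕ be the induced weight, ω(a_1⋯a_k) = w(a_1) + ⋯ + w(a_k). Then for every positive integer m, the submonoid of FreeMonoid A consisting of all words u with m ∣ ω(u) is free. -/
/-- The submonoid of words whose weight is divisible by `m`, where the weight of a
word is the sum of the weights of its letters. -/
def weightDvdSubmonoid {A : Type*} (w : A → ℕ) (m : ℕ) : Submonoid (FreeMonoid A) where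
  carrier := {u | m ∣ (u.toList.map w).sum}
  one_mem' := by simp [FreeMonoid.toList_one]
  mul_mem' := by
    intro a b ha hb
    simp only [Set.mem_setOf_eq, FreeMonoid.toList_mul, List.map_append, List.sum_append]
    exact dvd_add ha hb

section Aux

variable {A : Type u} (w : A → ℕ) (m : ℕ)

/-- An atom: a nonempty word of divisible weight with no proper nonempty prefix
of divisible weight. -/
def WIsAtom (u : FreeMonoid A) : Prop :=
  u.toList ≠ [] ∧ m ∣ (u.toList.map w).sum ∧
    ∀ p : List A, p <+: u.toList → p ≠ [] → m ∣ (p.map w).sum → p = u.toList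

/-- The canonical map from the free monoid on atoms into the submonoid. -/
noncomputable def wAtomLift :
    FreeMonoid {u : FreeMonoid A // WIsAtom w m u} →* weightDvdSubmonoid w m :=
  FreeMonoid.lift fun b => ⟨b.1, b.2.2.1⟩

theorem wAtomLift_of_mul_toList (b : {u : FreeMonoid A // WIsAtom w m u})
    (s : FreeMonoid {u : FreeMonoid A // WIsAtom w m u}) :
    ((wAtomLift w m (FreeMonoid.of b * s) : weightDvdSubmonoid w m) : FreeMonoid A).toList
      = b.1.toList ++ ((wAtomLift w m s : weightDvdSubmonoid w m) : FreeMonoid A).toList := by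
  rw [map_mul]
  simp [wAtomLift, FreeMonoid.lift_eval_of, FreeMonoid.toList_mul]

theorem wAtomLift_surj : Function.Surjective (wAtomLift w m) := by
  have H : ∀ n (u : FreeMonoid A) (hu : u ∈ weightDvdSubmonoid w m), u.toList.length = n →
      ∃ x, wAtomLift w m x = ⟨u, hu⟩ := by
    intro n
    induction n using Nat.strong_induction_on with
    | _ n ih =>
    intro u hu hn
    subst hn
    rcases eq_or_ne u.toList [] with h1 | h1
    · refine ⟨1, Subtype.ext ?_⟩
      have hu1 : u = 1 := by
        have := congrArg FreeMonoid.ofList h1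
        simpa [FreeMonoid.ofList_toList] using this
      simp only [map_one, OneMemClass.coe_one]
      exact hu1.symm
    · -- find the shortest nonempty prefix with divisible weight
      have hex : ∃ k, k ≠ 0 ∧ k ≤ u.toList.length ∧ m ∣ ((u.toList.take k).map w).sum := by
        refine ⟨u.toList.length, ?_, le_rfl, ?_⟩
        · exact fun h => h1 (List.length_eq_zero_iff.mp h)
        · simpa using (show m ∣ (u.toList.map w).sum from hu)
      classical
      set k := Nat.find hex with hk
      obtain ⟨hk0, hkle, hkdvd⟩ := Nat.find_spec hex
      have hk0' : k ≠ 0 := hk0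
      set p : List A := u.toList.take k with hp
      set r : List A := u.toList.drop k with hr
      have hpr : p ++ r = u.toList := List.take_append_drop k u.toList
      have hplen : p.length = k := by
        rw [hp, List.length_take]
        exact Nat.min_eq_left hkle
      have hpatom : WIsAtom w m (FreeMonoid.ofList p) := by
        refine ⟨?_, ?_, ?_⟩
        · simp only [FreeMonoid.toList_ofList]
          intro h
          rw [h] at hplen
          simp only [List.length_nil] at hplen
          exact hk0' hplen.symm
        · simpa [FreeMonoid.toList_ofList] using hkdvd
        · intro q hq hq0 hqd
          simp only [FreeMonoid.toList_ofList] at hq ⊢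
          by_contra hne
          have hqu : q <+: u.toList := hq.trans (List.take_prefix _ _)
          have hqe : q = u.toList.take q.length := List.prefix_iff_eq_take.mp hqu
          have hqlt : q.length < k := by
            have hle : q.length ≤ k := by
              have := hq.length_le
              simpa [hplen] using this
            rcases lt_or_eq_of_le hle with h | h
            · exact h
            · exact absurd (by rw [hqe, h]) hne
          exact Nat.find_min hex hqlt ⟨fun h => hq0 (List.length_eq_zero_iff.mp h),
            le_trans (le_of_lt hqlt) hkle, by rwa [← hqe]⟩
      have hrd : m ∣ (r.map w).sum := by
        have htot : m ∣ ((p ++ r).map w).sum := by rw [hpr]; exact hu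
        rw [List.map_append, List.sum_append] at htot
        exact (Nat.dvd_add_right hkdvd).mp htot
      have hrlen : r.length < u.toList.length := by
        simp only [hr, List.length_drop]
        have h0 : 0 < u.toList.length := List.length_pos_iff.mpr h1
        omega
      obtain ⟨x, hx⟩ := ih r.length hrlen (FreeMonoid.ofList r)
        (by simpa [weightDvdSubmonoid, FreeMonoid.toList_ofList] using hrd)
        (by simp [FreeMonoid.toList_ofList])
      refine ⟨FreeMonoid.of ⟨FreeMonoid.ofList p, hpatom⟩ * x, ?_⟩
      rw [map_mul, hx]
      ext
      show ((wAtomLift w m (FreeMonoid.of ⟨FreeMonoid.ofList p, hpatom⟩)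
        : weightDvdSubmonoid w m) : FreeMonoid A) * FreeMonoid.ofList r = u
      have h1' : ((wAtomLift w m (FreeMonoid.of ⟨FreeMonoid.ofList p, hpatom⟩)
          : weightDvdSubmonoid w m) : FreeMonoid A) = FreeMonoid.ofList p := by
        simp [wAtomLift, FreeMonoid.lift_eval_of]
      rw [h1']
      have : FreeMonoid.ofList (p ++ r) = u := by rw [hpr, FreeMonoid.ofList_toList]
      simpa [← FreeMonoid.ofList_append] using this
  rintro ⟨u, hu⟩
  exact H _ u hu rfl

theorem wAtomLift_inj : Function.Injective (wAtomLift w m) := by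
  intro x
  induction x using FreeMonoid.recOn with
  | one =>
    intro y hxy
    induction y using FreeMonoid.recOn with
    | one => rfl
    | of_mul b s _ =>
      exfalso
      have h := congrArg (fun z : weightDvdSubmonoid w m => (z : FreeMonoid A).toList) hxy
      rw [wAtomLift_of_mul_toList, map_one] at h
      have h' : ([] : List A) = b.1.toList ++ _ := h
      exact b.2.1 (List.append_eq_nil_iff.mp h'.symm).1
  | of_mul b s ihs =>
    intro y hxy
    induction y using FreeMonoid.recOn with
    | one =>
      exfalso
      have h := congrArg (fun z : weightDvdSubmonoid w m => (z : FreeMonoid A).toList) hxy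
      rw [wAtomLift_of_mul_toList, map_one] at h
      exact b.2.1 (List.append_eq_nil_iff.mp h).1
    | of_mul c t _ =>
      have h := congrArg (fun z : weightDvdSubmonoid w m => (z : FreeMonoid A).toList) hxy
      rw [wAtomLift_of_mul_toList, wAtomLift_of_mul_toList] at h
      have hpre : b.1.toList <+: c.1.toList ∨ c.1.toList <+: b.1.toList := by
        apply List.prefix_or_prefix_of_prefix
          (l₃ := b.1.toList ++ ((wAtomLift w m s : weightDvdSubmonoid w m) : FreeMonoid A).toList)
        · exact List.prefix_append _ _
        · rw [h]; exact List.prefix_append _ _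
      have hbc : b.1.toList = c.1.toList := by
        rcases hpre with hp | hp
        · exact c.2.2.2 _ hp b.2.1 b.2.2.1
        · exact (b.2.2.2 _ hp c.2.1 c.2.2.1).symm
      have hbce : b = c := by
        apply Subtype.ext
        have := congrArg FreeMonoid.ofList hbc
        simpa [FreeMonoid.ofList_toList] using this
      subst hbce
      have hst : wAtomLift w m s = wAtomLift w m t := by
        apply Subtype.ext
        have h2 := List.append_cancel_left h
        have h3 := congrArg FreeMonoid.ofList h2
        simpa [FreeMonoid.ofList_toList] using h3
      rw [ihs hst]

end Aux

theorem weightDvdSubmonoid_free {A : Type u} (w : A → ℕ) (hw : ∀ a, 0 < w a)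
    (m : ℕ) (hm : 0 < m) :
    ∃ B : Type u, Nonempty (weightDvdSubmonoid w m ≃* FreeMonoid B) := by
  refine ⟨{u : FreeMonoid A // WIsAtom w m u}, ⟨?_⟩⟩
  exact (MulEquiv.ofBijective (wAtomLift w m)
    ⟨wAtomLift_inj w m, wAtomLift_surj w m⟩).symm
end

section
/- Let p and q be distinct positive integers. Then for every n ≥ p, the number of compositions of n − p all of whose parts belong to {p, q} is equal to the number of compositions of n all of whose parts are of the form p + q·i for some i ∈ ℕ. -/
namespace CompAux

variable (p q : ℕ)

/-- Expansion: each part `a` (intended `a = p + q*i`) becomes `p :: replicate i q`. -/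
def E (l : List ℕ) : List ℕ := l.flatMap fun a => p :: List.replicate ((a - p) / q) q

/-- Grouping: inverse of `E` on suitable lists. -/
def G : List ℕ → List ℕ
  | [] => []
  | a :: t => (a + q * (t.takeWhile (· = q)).length) :: G (t.dropWhile (· = q))
  termination_by l => l.length
  decreasing_by
    simp only [List.length_cons]
    exact Nat.lt_succ_of_le ((List.dropWhile_sublist _).length_le)

lemma E_nil : E p q [] = [] := rfl

lemma E_cons (a : ℕ) (t : List ℕ) :
    E p q (a :: t) = p :: (List.replicate ((a - p) / q) q ++ E p q t) := by
  simp [E]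

lemma mem_E {l : List ℕ} {a : ℕ} (ha : a ∈ E p q l) : a = p ∨ a = q := by
  simp only [E, List.mem_flatMap, List.mem_cons] at ha
  obtain ⟨b, -, h | h⟩ := ha
  · exact Or.inl h
  · exact Or.inr (List.eq_of_mem_replicate h)

lemma sum_E (hq : 0 < q) {l : List ℕ} (hl : ∀ a ∈ l, ∃ i, a = p + q * i) :
    (E p q l).sum = l.sum := by
  induction l with
  | nil => rfl
  | cons a t ih =>
    obtain ⟨i, hi⟩ := hl a (List.mem_cons_self)
    rw [E_cons, List.sum_cons, List.sum_cons, List.sum_append, List.sum_replicate,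
      ih (fun b hb => hl b (List.mem_cons_of_mem _ hb)), hi]
    have h2 : (p + q * i - p) / q = i := by
      rw [Nat.add_sub_cancel_left, Nat.mul_div_cancel_left _ hq]
    rw [h2, smul_eq_mul]
    ring

lemma takeWhile_dropWhile_replicate (i : ℕ) (s : List ℕ)
    (hs : ∀ b, s.head? = some b → b ≠ q) :
    (List.replicate i q ++ s).takeWhile (· = q) = List.replicate i q ∧
    (List.replicate i q ++ s).dropWhile (· = q) = s := by
  induction i with
  | zero =>
    simp only [List.replicate_zero, List.nil_append]
    cases s with
    | nil => simp
    | cons b t =>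
      have hb : b ≠ q := hs b rfl
      constructor
      · rw [List.takeWhile_cons_of_neg]; simpa using hb
      · rw [List.dropWhile_cons_of_neg]; simpa using hb
  | succ i ih =>
    rw [List.replicate_succ, List.cons_append]
    constructor
    · rw [List.takeWhile_cons_of_pos (by simp)]
      rw [ih.1]
    · rw [List.dropWhile_cons_of_pos (by simp)]
      exact ih.2

lemma G_E (hq : 0 < q) (hpq : p ≠ q) :
    ∀ l : List ℕ, (∀ a ∈ l, ∃ i, a = p + q * i) → G q (E p q l) = l := by
  intro l
  induction l with
  | nil => intro _; rw [E_nil, G]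
  | cons a t ih =>
    intro hl
    obtain ⟨i, hi⟩ := hl a (List.mem_cons_self)
    have hi' : (a - p) / q = i := by
      rw [hi, Nat.add_sub_cancel_left, Nat.mul_div_cancel_left _ hq]
    have hhead : ∀ b, (E p q t).head? = some b → b ≠ q := by
      intro b hb
      cases t with
      | nil => simp [E_nil] at hb
      | cons c t' =>
        rw [E_cons] at hb
        simp only [List.head?_cons, Option.some.injEq] at hb
        rw [← hb]; exact hpq
    obtain ⟨h1, h2⟩ := takeWhile_dropWhile_replicate q ((a - p) / q) (E p q t) hhead
    rw [E_cons, G, h1, h2, List.length_replicate, hi',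
      ih (fun b hb => hl b (List.mem_cons_of_mem _ hb)), ← hi]

lemma G_spec (hq : 0 < q) :
    ∀ m : List ℕ, (∀ a ∈ m, a = p ∨ a = q) → (∀ b, m.head? = some b → b = p) →
      E p q (G q m) = m ∧ (G q m).sum = m.sum ∧ ∀ a ∈ G q m, ∃ i, a = p + q * i := by
  suffices H : ∀ (k : ℕ) (m : List ℕ), m.length ≤ k → (∀ a ∈ m, a = p ∨ a = q) →
      (∀ b, m.head? = some b → b = p) →
      E p q (G q m) = m ∧ (G q m).sum = m.sum ∧ ∀ a ∈ G q m, ∃ i, a = p + q * i by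
    exact fun m => H m.length m le_rfl
  intro k
  induction k with
  | zero =>
    intro m hm _ _
    have : m = [] := List.length_eq_zero_iff.mp (Nat.le_zero.mp hm)
    subst this
    exact ⟨by rw [G, E_nil], by rw [G], by rw [G]; simp⟩
  | succ k ihm =>
    intro m hmlen
    cases m with
    | nil => intro _ _; exact ⟨by rw [G, E_nil], by rw [G], by rw [G]; simp⟩
    | cons a t =>
      intro hmem hhead
      have ha : a = p := hhead a rfl
      have htt : (t.takeWhile (· = q)) ++ (t.dropWhile (· = q)) = t :=
        List.takeWhile_append_dropWhile
      have ht₂sub' : (t.dropWhile (· = q)).Sublist t := List.dropWhile_sublist _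
      have hlen : (t.dropWhile (· = q)).length ≤ k := by
        have := ht₂sub'.length_le
        simp only [List.length_cons] at hmlen
        omega
      have hmem₂ : ∀ b ∈ t.dropWhile (· = q), b = p ∨ b = q := fun b hb =>
        hmem b (List.mem_cons_of_mem _ (ht₂sub'.mem hb))
      have hhead₂ : ∀ b, (t.dropWhile (· = q)).head? = some b → b = p := by
        intro b hb
        have hbq : ¬ (b = q) := by
          have h := List.head?_dropWhile_not (fun x => decide (x = q)) t
          rw [hb] at h
          simpa using h
        have hbmem : b ∈ t.dropWhile (· = q) := by
          cases ht₂e : t.dropWhile (· = q) with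
          | nil => rw [ht₂e] at hb; simp at hb
          | cons c r =>
            rw [ht₂e] at hb
            simp only [List.head?_cons, Option.some.injEq] at hb
            subst hb; exact List.mem_cons_self
        rcases hmem₂ b hbmem with h | h
        · exact h
        · exact absurd h hbq
      obtain ⟨ih1, ih2, ih3⟩ := ihm _ hlen hmem₂ hhead₂
      have ht₁q : t.takeWhile (· = q) = List.replicate (t.takeWhile (· = q)).length q := by
        apply List.eq_replicate_of_mem
        intro b hb
        have := List.mem_takeWhile_imp (l := t) (p := (· = q)) hb
        simpa using this
      have hGsimp : G q (a :: t) =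
          (a + q * (t.takeWhile (· = q)).length) :: G q (t.dropWhile (· = q)) := by
        rw [G]
      have harg : (a + q * (t.takeWhile (· = q)).length - p) / q
          = (t.takeWhile (· = q)).length := by
        rw [ha, Nat.add_sub_cancel_left, Nat.mul_div_cancel_left _ hq]
      refine ⟨?_, ?_, ?_⟩
      · rw [hGsimp, E_cons, harg, ih1, ← ha, ← ht₁q, htt]
      · rw [hGsimp, List.sum_cons, ih2]
        have hsum₁ : (t.takeWhile (· = q)).sum = q * (t.takeWhile (· = q)).length := by
          rw [ht₁q]; simp [List.sum_replicate, mul_comm]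
        have hts : t.sum = (t.takeWhile (· = q)).sum + (t.dropWhile (· = q)).sum := by
          rw [← htt, List.sum_append]
          rw [htt]
        simp only [List.sum_cons, hts, hsum₁]
        ring
      · intro b hb
        rw [hGsimp, List.mem_cons] at hb
        rcases hb with hb | hb
        · exact ⟨(t.takeWhile (· = q)).length, by rw [hb, ha]⟩
        · exact ih3 b hb

end CompAux

theorem compositions_two_parts_eq_compositions_arithmetic
    (p q : ℕ) (hp : 0 < p) (hq : 0 < q) (hpq : p ≠ q) (n : ℕ) (hn : p ≤ n) :
    Nat.card {c : Composition (n - p) // ∀ a ∈ c.blocks, a = p ∨ a = q} =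
      Nat.card {c : Composition n // ∀ a ∈ c.blocks, ∃ i : ℕ, a = p + q * i} := by
  classical
  have hn0 : 0 < n := lt_of_lt_of_le hp hn
  -- the map from arithmetic compositions of n to {p,q}-compositions of n-p
  have key : ∀ (c : Composition n), (∀ a ∈ c.blocks, ∃ i : ℕ, a = p + q * i) →
      ∃ (t : List ℕ), CompAux.E p q c.blocks = p :: t := by
    intro c hc
    cases hb : c.blocks with
    | nil =>
      exfalso
      have := c.blocks_sum
      rw [hb] at this
      simp at this
      omega
    | cons a t => exact ⟨_, by rw [CompAux.E_cons]⟩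
  let f : {c : Composition n // ∀ a ∈ c.blocks, ∃ i : ℕ, a = p + q * i} →
      {c : Composition (n - p) // ∀ a ∈ c.blocks, a = p ∨ a = q} := fun ⟨c, hc⟩ =>
    ⟨⟨(CompAux.E p q c.blocks).tail,
      by
        intro i hi
        have hi' : i ∈ CompAux.E p q c.blocks := List.mem_of_mem_tail hi
        rcases CompAux.mem_E p q hi' with h | h
        · omega
        · omega,
      by
        obtain ⟨t, ht⟩ := key c hc
        have hsum : (CompAux.E p q c.blocks).sum = n := by
          rw [CompAux.sum_E p q hq hc, c.blocks_sum]
        rw [ht] at hsum ⊢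
        simp only [List.tail_cons]
        simp only [List.sum_cons] at hsum
        omega⟩,
      fun a ha => CompAux.mem_E p q (List.mem_of_mem_tail ha)⟩
  have hinj : Function.Injective f := by
    rintro ⟨c₁, hc₁⟩ ⟨c₂, hc₂⟩ hfe
    obtain ⟨t₁, ht₁⟩ := key c₁ hc₁
    obtain ⟨t₂, ht₂⟩ := key c₂ hc₂
    have htail : (CompAux.E p q c₁.blocks).tail = (CompAux.E p q c₂.blocks).tail := by
      have := congrArg (fun x => (x.1 : Composition (n-p)).blocks) hfe
      simpa [f] using this
    have hE : CompAux.E p q c₁.blocks = CompAux.E p q c₂.blocks := by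
      rw [ht₁, ht₂] at htail ⊢
      simp only [List.tail_cons] at htail
      rw [htail]
    have : c₁.blocks = c₂.blocks := by
      have h1 := CompAux.G_E p q hq hpq c₁.blocks hc₁
      have h2 := CompAux.G_E p q hq hpq c₂.blocks hc₂
      rw [← h1, ← h2, hE]
    exact Subtype.ext (Composition.ext this)
  have hsurj : Function.Surjective f := by
    rintro ⟨c, hc⟩
    set m : List ℕ := p :: c.blocks with hm
    have hmem : ∀ a ∈ m, a = p ∨ a = q := by
      intro a ha
      rw [hm, List.mem_cons] at ha
      rcases ha with h | h
      · exact Or.inl h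
      · exact hc a h
    have hhead : ∀ b, m.head? = some b → b = p := by
      intro b hb; rw [hm] at hb; simpa using hb.symm
    obtain ⟨h1, h2, h3⟩ := CompAux.G_spec p q hq m hmem hhead
    have hsum : (CompAux.G q m).sum = n := by
      rw [h2, hm, List.sum_cons, c.blocks_sum]
      omega
    have hpos : ∀ {i : ℕ}, i ∈ CompAux.G q m → 0 < i := by
      intro i hi
      obtain ⟨j, hj⟩ := h3 i hi
      omega
    refine ⟨⟨⟨CompAux.G q m, hpos, hsum⟩, h3⟩, ?_⟩
    apply Subtype.ext
    apply Composition.ext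
    show (CompAux.E p q (CompAux.G q m)).tail = c.blocks
    rw [h1, hm, List.tail_cons]
  exact (Nat.card_eq_of_bijective f ⟨hinj, hsurj⟩).symm
end

section
/- Fix an integer k ≥ 2, and let c : ℕ → ℤ be the sequence determined by the formal power series equation (1 − X − X² + X^k) · (Σ_{n≥0} c_n X^n) = X^k in ℤ⟦X⟧. Then for every n ≥ 1, the sum over all compositions (a_1, …, a_k') of n of the products c_{a_1} c_{a_2} ⋯ c_{a_{k'}} equals F_{n−k+1} if n ≥ k, and equals 0 if 1 ≤ n < k. -/
open PowerSeries

/-- Splitting off the first block of a composition of a positive number. -/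
def compSplitEquiv (m : ℕ) (hm : 0 < m) : Composition m ≃ Σ j : Fin m, Composition j where
  toFun comp :=
    ⟨⟨comp.blocks.tail.sum, by
        rcases hb : comp.blocks with _ | ⟨a, t⟩
        · have := comp.blocks_sum; rw [hb] at this; simp at this; omega
        · have ha : 0 < a := comp.blocks_pos (hb ▸ (List.mem_cons_self : a ∈ a :: t))
          have hs := comp.blocks_sum
          rw [hb] at hs
          simp only [List.sum_cons] at hs
          simp only [hb, List.tail_cons]
          omega⟩,
      ⟨comp.blocks.tail, fun hi => comp.blocks_pos (List.mem_of_mem_tail hi), rfl⟩⟩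
  invFun x :=
    ⟨(m - x.1) :: x.2.blocks, by
        intro i hi
        rcases List.mem_cons.1 hi with rfl | hi
        · have := x.1.2; omega
        · exact x.2.blocks_pos hi, by
        have h1 : x.2.blocks.sum = x.1 := x.2.blocks_sum
        have := x.1.2.le
        simp only [List.sum_cons, h1]
        omega⟩
  left_inv := by
    rintro ⟨bl, pos, hsum⟩
    rcases bl with _ | ⟨a, t⟩
    · simp at hsum; omega
    · have ha : 0 < a := pos ((List.mem_cons_self : a ∈ a :: t))
      simp only [List.sum_cons] at hsum
      have hat : m - t.sum = a := by omega
      simp only [List.tail_cons]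
      exact Composition.ext (show (m - t.sum) :: t = a :: t by rw [hat])
  right_inv := by
    rintro ⟨⟨j, hj⟩, bl, pos, hsum⟩
    simp only at hsum
    subst hsum
    rfl

lemma compS_rec (c : ℕ → ℤ) (m : ℕ) (hm : 0 < m) :
    (∑ comp : Composition m, (comp.blocks.map c).prod) =
      ∑ j ∈ Finset.range m, c (m - j) * ∑ d : Composition j, (d.blocks.map c).prod := by
  rw [Fintype.sum_equiv (compSplitEquiv m hm)
      (fun comp => (comp.blocks.map c).prod)
      (fun x => c (m - x.1) * (x.2.blocks.map c).prod) ?_]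
  · rw [← Finset.univ_sigma_univ, Finset.sum_sigma]
    rw [← Fin.sum_univ_eq_sum_range (fun j => c (m - j) * ∑ d : Composition j, (d.blocks.map c).prod)]
    refine Finset.sum_congr rfl fun j _ => ?_
    rw [Finset.mul_sum]
  · intro comp
    rcases hb : comp.blocks with _ | ⟨a, t⟩
    · have := comp.blocks_sum; rw [hb] at this; simp at this; omega
    · have ha : 0 < a := comp.blocks_pos (hb ▸ (List.mem_cons_self : a ∈ a :: t))
      have hs := comp.blocks_sum
      rw [hb] at hs
      simp only [List.sum_cons] at hs
      simp only [compSplitEquiv, Equiv.coe_fn_mk, hb, List.tail_cons, List.map_cons,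
        List.prod_cons]
      have : m - t.sum = a := by omega
      rw [this]

theorem sum_over_compositions_prime_gf_fib
    (k : ℕ) (hk : 2 ≤ k) (c : ℕ → ℤ)
    (hc : (1 - X - X ^ 2 + X ^ k : PowerSeries ℤ) * PowerSeries.mk c = X ^ k)
    (n : ℕ) (hn : 1 ≤ n) :
    ∑ comp : Composition n, (comp.blocks.map c).prod =
      if k ≤ n then (Nat.fib (n - k + 1) : ℤ) else 0 := by
  have hk0 : k ≠ 0 := by omega
  -- c 0 = 0
  have hc0 : c 0 = 0 := by
    have := congrArg (constantCoeff (R := ℤ)) hc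
    simp [hk0] at this
    exact this
  set S : ℕ → ℤ := fun m => ∑ comp : Composition m, (comp.blocks.map c).prod with hS
  have hS0 : S 0 = 1 := by
    have h1 : ∀ comp : Composition 0, (comp.blocks.map c).prod = 1 := by
      intro comp
      have : comp.blocks = [] := by
        rcases hb : comp.blocks with _ | ⟨a, t⟩
        · rfl
        · have ha : 0 < a := comp.blocks_pos (hb ▸ (List.mem_cons_self : a ∈ a :: t))
          have hs := comp.blocks_sum
          rw [hb] at hs
          simp only [List.sum_cons] at hs
          omega
      simp [this]
    rw [hS]
    simp only [Finset.sum_congr rfl (fun x _ => h1 x), Finset.sum_const, Finset.card_univ,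
      composition_card]
    simp
  set T : PowerSeries ℤ := PowerSeries.mk S with hT
  have h1 : (1 - PowerSeries.mk c) * T = 1 := by
    ext m
    rw [sub_mul, one_mul, map_sub, coeff_mul]
    rcases m with _ | m
    · simp [hT, hS0, hc0]
    · rw [Finset.Nat.sum_antidiagonal_eq_sum_range_succ_mk, Finset.sum_range_succ']
      simp only [hT, coeff_mk, coeff_one, Nat.succ_ne_zero, if_false]
      rw [hc0, zero_mul, add_zero]
      have hrec : S (m + 1) = ∑ j ∈ Finset.range (m + 1), c (m + 1 - j) * S j :=
        compS_rec c (m + 1) (Nat.succ_pos m)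
      have : ∑ i ∈ Finset.range (m + 1), c (i + 1) * S (m + 1 - (i + 1)) =
          ∑ j ∈ Finset.range (m + 1), c (m + 1 - j) * S j := by
        rw [← Finset.sum_range_reflect (fun j => c (m + 1 - j) * S j) (m + 1)]
        refine Finset.sum_congr rfl fun i hi => ?_
        rw [Finset.mem_range] at hi
        have e1 : m + 1 - (m + 1 - 1 - i) = i + 1 := by omega
        have e2 : m + 1 - 1 - i = m + 1 - (i + 1) := by omega
        rw [e1, e2]
      rw [this, ← hrec]
      ring
  set F : PowerSeries ℤ := PowerSeries.mk (fun m => (Nat.fib (m + 1) : ℤ)) with hF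
  have hFinv : (1 - X - X ^ 2 : PowerSeries ℤ) * F = 1 := by
    ext m
    rw [sub_mul, sub_mul, one_mul]
    nth_rewrite 1 [show (X : PowerSeries ℤ) = X ^ 1 by rw [pow_one]]
    rw [map_sub, map_sub, coeff_X_pow_mul', coeff_X_pow_mul']
    rcases m with _ | m
    · simp [hF]
    · rcases m with _ | m
      · simp [hF, coeff_one]
      · have h2 : 2 ≤ m + 2 := by omega
        have h1' : 1 ≤ m + 2 := by omega
        rw [if_pos h1', if_pos h2]
        simp only [hF, coeff_mk, coeff_one]
        have e1 : m + 2 - 1 = m + 1 := by omega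
        have e2 : m + 2 - 2 = m := by omega
        rw [e1, e2, if_neg (by omega)]
        have := Nat.fib_add_two (n := m + 1)
        push_cast [this]
        ring
  have hP : (1 - X - X ^ 2 + X ^ k : PowerSeries ℤ) * (1 - PowerSeries.mk c) =
      1 - X - X ^ 2 := by
    rw [mul_sub, mul_one, hc]
    ring
  have h2 : (1 - X - X ^ 2 : PowerSeries ℤ) * (T - 1) = X ^ k := by
    have : (1 - X - X ^ 2 : PowerSeries ℤ) * T = 1 - X - X ^ 2 + X ^ k := by
      calc (1 - X - X ^ 2 : PowerSeries ℤ) * T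
          = ((1 - X - X ^ 2 + X ^ k) * (1 - PowerSeries.mk c)) * T := by rw [hP]
        _ = (1 - X - X ^ 2 + X ^ k) * ((1 - PowerSeries.mk c) * T) := by ring
        _ = 1 - X - X ^ 2 + X ^ k := by rw [h1, mul_one]
    rw [mul_sub, this, mul_one]
    ring
  have hne : (1 - X - X ^ 2 : PowerSeries ℤ) ≠ 0 := by
    intro h
    have := congrArg (constantCoeff (R := ℤ)) h
    simp at this
  have h3 : T - 1 = X ^ k * F := by
    apply mul_left_cancel₀ hne
    rw [h2, mul_left_comm, hFinv, mul_one]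
  have key : S n = if k ≤ n then (Nat.fib (n - k + 1) : ℤ) else 0 := by
    have : S n = coeff n (T - 1) := by
      rw [map_sub]
      simp only [hT, coeff_mk, coeff_one, if_neg (show ¬ n = 0 by omega), sub_zero]
    rw [this, h3, coeff_X_pow_mul']
    split_ifs with h
    · simp [hF]
    · rfl
  exact key
end

section
/- Fix an integer m ≥ 1, and let r : ℕ → ℕ be defined by r_0 = 1 and, for n ≥ 1, r_n = r_{n−1} + r_{n−m} where the term r_{n−m} is taken to be 0 when n < m (so that Σ_{n≥0} r_n x^n = 1/(1 − x − x^m)). Then for every n ≥ m + 1, r_{n−m−1} equals the sum, over all compositions (a_1, …, a_k) of n, of the products ⌊(a_1 − 1)/m⌋ ⌊(a_2 − 1)/m⌋ ⋯ ⌊(a_k − 1)/m⌋. -/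
open Finset

lemma comp_facts {n : ℕ} (c : Composition (n+1)) :
    1 ≤ c.blocks.headI ∧ c.blocks.headI ≤ n+1 ∧
      c.blocks.tail.sum = n + 1 - c.blocks.headI ∧ c.blocks = c.blocks.headI :: c.blocks.tail := by
  rcases h : c.blocks with _ | ⟨a, l⟩
  · have := c.blocks_sum; simp [h] at this
  · have hs := c.blocks_sum; rw [h] at hs; simp at hs
    have : 0 < a := c.blocks_pos (h ▸ List.mem_cons_self)
    simp
    omega

def compSplit (n : ℕ) : Composition (n+1) ≃ (i : Fin (n+1)) × Composition (n - i) where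
  toFun c :=
    ⟨⟨c.blocks.headI - 1, by have := comp_facts c; omega⟩,
      c.blocks.tail, fun hi => c.blocks_pos (List.mem_of_mem_tail hi),
      by have := comp_facts c; simp; omega⟩
  invFun x := ⟨(x.1 + 1) :: x.2.blocks, by
      intro i hi
      rcases List.mem_cons.1 hi with h | h
      · omega
      · exact x.2.blocks_pos h, by
      simp [x.2.blocks_sum]
      have := x.1.isLt; omega⟩
  left_inv c := by
    have h := comp_facts c
    ext1
    show (c.blocks.headI - 1 + 1) :: c.blocks.tail = c.blocks
    rw [(by omega : c.blocks.headI - 1 + 1 = c.blocks.headI)]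
    exact h.2.2.2.symm
  right_inv x := by
    rcases x with ⟨⟨i, hi⟩, d⟩
    rfl

def gcomp (m n : ℕ) : ℕ := ∑ c : Composition n, (c.blocks.map fun a => (a - 1) / m).prod

lemma gcomp_zero (m : ℕ) : gcomp m 0 = 1 := by
  have h : ∀ c : Composition 0, c.blocks = [] := by
    intro c
    have hs := c.blocks_sum
    rcases hc : c.blocks with _ | ⟨a, l⟩
    · rfl
    · have : 0 < a := c.blocks_pos (hc ▸ List.mem_cons_self)
      rw [hc] at hs; simp at hs; omega
  have h2 : gcomp m 0 = ∑ _c : Composition 0, 1 :=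
    Finset.sum_congr rfl (fun c _ => by rw [h c]; rfl)
  rw [h2]
  simp [composition_card]

lemma gcomp_succ (m n : ℕ) :
    gcomp m (n+1) = ∑ i ∈ Finset.range (n+1), (i / m) * gcomp m (n - i) := by
  unfold gcomp
  rw [← Equiv.sum_comp (compSplit n).symm
    (fun c => ((c.blocks.map fun a => (a - 1) / m)).prod)]
  rw [← Finset.univ_sigma_univ, Finset.sum_sigma]
  rw [← Fin.sum_univ_eq_sum_range]
  refine Finset.sum_congr rfl fun i _ => ?_
  rw [Finset.mul_sum]
  refine Finset.sum_congr rfl fun d _ => ?_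
  show ((((i : ℕ) + 1) :: d.blocks).map fun a => (a - 1) / m).prod = _
  simp [Nat.add_sub_cancel]

lemma divsum (m : ℕ) (hm : 1 ≤ m) (f : ℕ → ℕ) (N : ℕ) :
    ∑ j ∈ Finset.range N, (if m ∣ (N - j) then f j else 0)
      = ∑ s ∈ Finset.range (N / m), f (N - (s+1)*m) := by
  rw [← Finset.sum_filter]
  refine Finset.sum_nbij' (i := fun j => (N - j)/m - 1) (j := fun s => N - (s+1)*m)
    ?_ ?_ ?_ ?_ ?_
  · intro a ha
    simp only [Finset.mem_filter, Finset.mem_range] at ha ⊢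
    obtain ⟨haN, k, hk⟩ := ha
    have hk1 : 1 ≤ k := by nlinarith [Nat.one_le_iff_ne_zero.2 (by rintro rfl; omega : k ≠ 0)]
    have h1 : (N - a)/m = k := by rw [hk, Nat.mul_div_cancel_left _ (by omega : 0 < m)]
    have hc : k * m = m * k := Nat.mul_comm _ _
    have h2 : k * m ≤ N := by omega
    have h3 := (Nat.le_div_iff_mul_le (by omega : 0 < m)).2 h2
    omega
  · intro s hs
    simp only [Finset.mem_range] at hs
    simp only [Finset.mem_filter, Finset.mem_range]
    have hc : (s+1) * m = m * (s+1) := Nat.mul_comm _ _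
    have h2 : (s+1) * m ≤ N := by
      calc (s+1)*m ≤ (N/m)*m := Nat.mul_le_mul_right _ (by omega)
      _ ≤ N := Nat.div_mul_le_self _ _
    constructor
    · have : 1 ≤ (s+1)*m := by nlinarith
      omega
    · exact ⟨s+1, by omega⟩
  · intro a ha
    simp only [Finset.mem_filter, Finset.mem_range] at ha
    obtain ⟨haN, k, hk⟩ := ha
    have hk1 : 1 ≤ k := by nlinarith [Nat.one_le_iff_ne_zero.2 (by rintro rfl; omega : k ≠ 0)]
    have h1 : (N - a)/m = k := by rw [hk, Nat.mul_div_cancel_left _ (by omega : 0 < m)]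
    show N - ((N - a)/m - 1 + 1) * m = a
    rw [h1]
    have hc : (k - 1 + 1) * m = m * k := by rw [Nat.sub_add_cancel hk1]; ring
    rw [hc]
    omega
  · intro s hs
    simp only [Finset.mem_range] at hs
    have hc : (s+1) * m = m * (s+1) := Nat.mul_comm _ _
    have h2 : (s+1) * m ≤ N := by
      calc (s+1)*m ≤ (N/m)*m := Nat.mul_le_mul_right _ (by omega)
      _ ≤ N := Nat.div_mul_le_self _ _
    show (N - (N - (s+1)*m))/m - 1 = s
    have h3 : N - (N - (s+1)*m) = m * (s+1) := by omega
    rw [h3, Nat.mul_div_cancel_left _ (by omega : 0 < m)]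
    omega
  · intro a ha
    simp only [Finset.mem_filter, Finset.mem_range] at ha
    obtain ⟨haN, k, hk⟩ := ha
    have hk1 : 1 ≤ k := by nlinarith [Nat.one_le_iff_ne_zero.2 (by rintro rfl; omega : k ≠ 0)]
    have h1 : (N - a)/m = k := by rw [hk, Nat.mul_div_cancel_left _ (by omega : 0 < m)]
    show f a = f (N - ((N - a)/m - 1 + 1) * m)
    rw [h1]
    have hc : (k - 1 + 1) * m = m * k := by rw [Nat.sub_add_cancel hk1]; ring
    rw [hc]
    congr 1
    omega

lemma lemE (m : ℕ) (hm : 1 ≤ m) (r : ℕ → ℕ) (hr0 : r 0 = 1)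
    (hr : ∀ n, 1 ≤ n → r n = r (n - 1) + (if m ≤ n then r (n - m) else 0)) :
    ∀ L, r L = (if m ∣ L then 1 else 0)
      + ∑ s ∈ Finset.range ((L + m - 1)/m), r (L - 1 - s*m) := by
  intro L
  induction L using Nat.strong_induction_on with
  | _ L IH =>
    match L with
    | 0 =>
      rw [Nat.div_eq_of_lt (by omega)]
      simp [hr0]
    | (K+1) =>
      by_cases hK : m ≤ K + 1
      · have h1 := hr (K+1) (by omega)
        rw [if_pos hK] at h1
        have IH2 := IH (K+1-m) (by omega)
        have hrange : (K + 1 - m + m - 1)/m = K/m := by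
          congr 1; omega
        have hrange2 : (K + 1 + m - 1)/m = K/m + 1 := by
          rw [(by omega : K + 1 + m - 1 = K + m), Nat.add_div_right _ (by omega : 0 < m)]
        have h : K + 1 - m + m = K + 1 := by omega
        have hdvd : m ∣ K + 1 - m ↔ m ∣ K + 1 :=
          ⟨fun hd => by rw [← h]; exact Nat.dvd_add hd dvd_rfl,
           fun hd => Nat.dvd_sub hd dvd_rfl⟩
        rw [hrange, if_congr hdvd rfl rfl] at IH2
        rw [hrange2, Finset.sum_range_succ']
        have hterm : ∀ s, K + 1 - 1 - (s+1)*m = K + 1 - m - 1 - s*m := by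
          intro s
          have : (s+1)*m = s*m + m := by ring
          omega
        have hsum : ∑ s ∈ Finset.range (K/m), r (K + 1 - 1 - (s+1)*m)
            = ∑ s ∈ Finset.range (K/m), r (K + 1 - m - 1 - s*m) :=
          Finset.sum_congr rfl fun s _ => by rw [hterm s]
        rw [hsum]
        simp only [Nat.add_sub_cancel, Nat.zero_mul, Nat.sub_zero]
        simp only [Nat.add_sub_cancel] at h1
        omega
      · have h1 := hr (K+1) (by omega)
        rw [if_neg hK] at h1
        have hd : ¬ m ∣ K + 1 := fun hd => by have := Nat.le_of_dvd (by omega) hd; omega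
        have hrange2 : (K + 1 + m - 1)/m = 1 := by
          rw [(by omega : K + 1 + m - 1 = K + m), Nat.add_div_right _ (by omega : 0 < m),
            Nat.div_eq_of_lt (by omega)]
        rw [hrange2, if_neg hd, Finset.sum_range_one]
        simp only [Nat.zero_mul, Nat.sub_zero, Nat.add_sub_cancel]
        simp only [Nat.add_sub_cancel] at h1
        omega

lemma lemIdent (m : ℕ) (hm : 1 ≤ m) (r : ℕ → ℕ) (hr0 : r 0 = 1)
    (hr : ∀ n, 1 ≤ n → r n = r (n - 1) + (if m ≤ n then r (n - m) else 0)) :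
    ∀ N, r N = N/m + 1 + ∑ j ∈ Finset.range N, ((N - 1 - j)/m) * r j := by
  intro N
  induction N with
  | zero => simp [hr0]
  | succ N IH =>
    -- rewrite the sum
    have hsum1 : ∑ j ∈ Finset.range (N+1), ((N + 1 - 1 - j)/m) * r j
        = (∑ j ∈ Finset.range N, ((N - 1 - j)/m) * r j)
          + ∑ j ∈ Finset.range N, (if m ∣ (N - j) then r j else 0) := by
      rw [Finset.sum_range_succ]
      rw [(by simp : ((N + 1 - 1 - N)/m) * r N = 0), Nat.add_zero]
      rw [← Finset.sum_add_distrib]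
      refine Finset.sum_congr rfl fun j hj => ?_
      simp only [Finset.mem_range] at hj
      have h1 : N + 1 - 1 - j = (N - 1 - j) + 1 := by omega
      rw [h1, Nat.succ_div]
      have h2 : N - 1 - j + 1 = N - j := by omega
      rw [h2]
      rw [add_mul, ite_mul, one_mul, zero_mul]
    rw [hsum1, divsum m hm r N]
    have hE := lemE m hm r hr0 hr (N+1)
    have hrange : (N + 1 + m - 1)/m = N/m + 1 := by
      rw [(by omega : N + 1 + m - 1 = N + m), Nat.add_div_right _ (by omega : 0 < m)]
    rw [hrange, Finset.sum_range_succ'] at hE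
    have hfix : ∑ s ∈ Finset.range (N/m), r (N + 1 - 1 - (s+1)*m)
        = ∑ s ∈ Finset.range (N/m), r (N - (s+1)*m) :=
      Finset.sum_congr rfl fun s _ => by
        have h : N + 1 - 1 - (s+1)*m = N - (s+1)*m := by omega
        rw [h]
    rw [hfix] at hE
    simp only [Nat.zero_mul, Nat.sub_zero, Nat.add_sub_cancel] at hE
    rw [Nat.succ_div]
    omega

lemma mainLem (m : ℕ) (hm : 1 ≤ m) (r : ℕ → ℕ) (hr0 : r 0 = 1)
    (hr : ∀ n, 1 ≤ n → r n = r (n - 1) + (if m ≤ n then r (n - m) else 0)) :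
    ∀ n, gcomp m n = if n = 0 then 1 else if n ≤ m then 0 else r (n - m - 1) := by
  intro n
  induction n using Nat.strong_induction_on with
  | _ n IH =>
    match n with
    | 0 => simp [gcomp_zero]
    | (k+1) =>
      rw [gcomp_succ]
      have hIH : ∀ i ∈ Finset.range (k+1), (i/m) * gcomp m (k - i)
          = (i/m) * (if k - i = 0 then 1 else if k - i ≤ m then 0 else r (k - i - m - 1)) :=
        fun i hi => by
          rw [IH (k-i) (by simp only [Finset.mem_range] at hi; omega)]
      rw [Finset.sum_congr rfl hIH]
      by_cases hk : k + 1 ≤ m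
      · rw [if_neg (by omega), if_pos hk]
        refine Finset.sum_eq_zero fun i hi => ?_
        simp only [Finset.mem_range] at hi
        rw [Nat.div_eq_of_lt (by omega)]
        simp
      · rw [if_neg (by omega), if_neg (by omega)]
        have hkm : k + 1 - m - 1 = k - m := by omega
        rw [hkm]
        rw [Finset.sum_range_succ]
        have hlast : (k/m) * (if k - k = 0 then 1 else if k - k ≤ m then 0 else r (k - k - m - 1))
            = k/m := by simp
        rw [hlast]
        rw [Finset.range_eq_Ico,
          ← Finset.sum_Ico_consecutive _ (Nat.zero_le (k-m)) (by omega : k - m ≤ k)]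
        have hmid : ∑ i ∈ Finset.Ico (k-m) k,
            (i/m) * (if k - i = 0 then 1 else if k - i ≤ m then 0 else r (k - i - m - 1)) = 0 :=
          Finset.sum_eq_zero fun i hi => by
            simp only [Finset.mem_Ico] at hi
            rw [if_neg (by omega), if_pos (by omega), Nat.mul_zero]
        rw [hmid, Nat.add_zero]
        have hfirst : ∑ i ∈ Finset.Ico 0 (k-m),
            (i/m) * (if k - i = 0 then 1 else if k - i ≤ m then 0 else r (k - i - m - 1))
            = ∑ i ∈ Finset.range (k-m), (i/m) * r (k - m - 1 - i) := by
          rw [← Finset.range_eq_Ico]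
          refine Finset.sum_congr rfl fun i hi => ?_
          simp only [Finset.mem_range] at hi
          rw [if_neg (by omega), if_neg (by omega),
            (by omega : k - i - m - 1 = k - m - 1 - i)]
        rw [hfirst]
        have hId := lemIdent m hm r hr0 hr (k-m)
        have hreflect := Finset.sum_range_reflect (fun i => (i/m) * r (k - m - 1 - i)) (k-m)
        have hfix : ∑ j ∈ Finset.range (k-m), ((k-m-1-j)/m) * r (k - m - 1 - (k - m - 1 - j))
            = ∑ j ∈ Finset.range (k-m), ((k-m-1-j)/m) * r j :=
          Finset.sum_congr rfl fun j hj => by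
            simp only [Finset.mem_range] at hj
            have h : k - m - 1 - (k - m - 1 - j) = j := by omega
            rw [h]
        rw [hfix] at hreflect
        have hk2 : k/m = (k-m)/m + 1 := by
          rw [(by omega : k = (k - m) + m), Nat.add_div_right _ (by omega : 0 < m)]
          congr 2
          omega
        omega

theorem sum_over_compositions_floor_div_m
    (m : ℕ) (hm : 1 ≤ m) (r : ℕ → ℕ) (hr0 : r 0 = 1)
    (hr : ∀ n, 1 ≤ n → r n = r (n - 1) + (if m ≤ n then r (n - m) else 0))
    (n : ℕ) (hn : m + 1 ≤ n) :
    r (n - m - 1) =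
      ∑ c : Composition n, (c.blocks.map fun a => (a - 1) / m).prod := by
  have h := mainLem m hm r hr0 hr n
  rw [if_neg (by omega), if_neg (by omega)] at h
  exact h.symm
end

section
/- For every integer m ≥ 1, the following identity holds in ℤ⟦X⟧: (Σ_{n≥0} F_{mn+1} X^n) · ((1 − F_{m−1}·X)·(1 − F_{m+1}·X) − F_m²·X²) = 1 − F_{m−1}·X. (Equivalently, Σ_{n≥0} F_{mn+1} x^n = (1 − F_{m+1}x − F_m² x²/(1 − F_{m−1}x))^{−1}.) -/
open PowerSeries

lemma coeff_aux (f : ℤ⟦X⟧) (s t : ℤ) (n : ℕ) :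
    coeff (n+2) (f * (1 - C s * X + C t * X^2)) =
      coeff (n+2) f - s * coeff (n+1) f + t * coeff n f := by
  have h1 : f * (1 - C s * X + C t * X^2)
      = f - C s * (f * X) + C t * (f * X^2) := by ring
  rw [h1]
  simp only [map_add, map_sub, coeff_C_mul, coeff_mul_X_pow]
  rw [show n + 2 = (n+1) + 1 from rfl, coeff_succ_mul_X]

lemma fib_rec (m n : ℕ) (hm : 1 ≤ m) :
    (Nat.fib (m * (n+2) + 1) : ℤ) =
      ((Nat.fib (m-1) : ℤ) + Nat.fib (m+1)) * Nat.fib (m * (n+1) + 1) -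
      ((Nat.fib (m-1) : ℤ) * Nat.fib (m+1) - (Nat.fib m : ℤ)^2) * Nat.fib (m * n + 1) := by
  obtain ⟨j, rfl⟩ : ∃ j, m = j + 1 := ⟨m - 1, (Nat.succ_pred_eq_of_pos hm).symm⟩
  set k := (j+1) * n with hk
  have e1 : (j+1) * (n+1) + 1 = k + (j+1) + 1 := by ring
  have e2 : (j+1) * (n+2) + 1 = (k + (j+1)) + (j+1) + 1 := by ring
  have e3 : k + (j + 1) = k + j + 1 := by ring
  rw [e1, e2, Nat.fib_add, Nat.fib_add, e3, Nat.fib_add]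
  simp only [Nat.add_sub_cancel]
  push_cast
  ring

theorem fib_multisection_gf_m0 (m : ℕ) (hm : 1 ≤ m) :
    (PowerSeries.mk fun n => (Nat.fib (m * n + 1) : ℤ)) *
        ((1 - (C : ℤ →+* PowerSeries ℤ) (Nat.fib (m - 1)) * X) * (1 - (C : ℤ →+* PowerSeries ℤ) (Nat.fib (m + 1)) * X) -
          (C : ℤ →+* PowerSeries ℤ) ((Nat.fib m : ℤ) ^ 2) * X ^ 2) =
      1 - (C : ℤ →+* PowerSeries ℤ) (Nat.fib (m - 1)) * X := by
  set a : ℤ := ((Nat.fib (m-1) : ℤ))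
  set b : ℤ := ((Nat.fib (m+1) : ℤ))
  set c2 : ℤ := (Nat.fib m : ℤ)^2
  have expand : (1 - C a * X) * (1 - C b * X) - C c2 * X^2
      = 1 - C (a + b) * X + C (a * b - c2) * X^2 := by
    simp only [map_add, map_sub, map_mul]; ring
  rw [expand]
  ext n
  match n with
  | 0 =>
    simp [coeff_zero_eq_constantCoeff, map_add, map_sub, map_mul]
  | 1 =>
    have h1 : (PowerSeries.mk fun n => (Nat.fib (m * n + 1) : ℤ)) *
        (1 - C (a+b) * X + C (a*b - c2) * X^2)
        = (PowerSeries.mk fun n => (Nat.fib (m * n + 1) : ℤ))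
          - C (a+b) * ((PowerSeries.mk fun n => (Nat.fib (m * n + 1) : ℤ)) * X)
          + C (a*b - c2) * ((PowerSeries.mk fun n => (Nat.fib (m * n + 1) : ℤ)) * X^2) := by ring
    rw [h1]
    have hX : coeff 1 ((PowerSeries.mk fun n => (Nat.fib (m*n+1):ℤ)) * X)
        = coeff 0 (PowerSeries.mk fun n => (Nat.fib (m*n+1):ℤ)) := coeff_succ_mul_X 0 _
    have hX2 : coeff 1 ((PowerSeries.mk fun n => (Nat.fib (m*n+1):ℤ)) * X^2) = 0 := by
      rw [coeff_mul_X_pow']; simp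
    simp only [map_add, map_sub, map_mul, add_mul, sub_mul, mul_assoc, coeff_C_mul, hX, hX2,
      coeff_mk, coeff_one, coeff_X, mul_zero]
    norm_num [a, b]
  | Nat.succ (Nat.succ n) =>
    rw [coeff_aux]
    have := fib_rec m n hm
    simp only [Nat.succ_eq_add_one, coeff_mk, map_sub, coeff_one, coeff_C_mul, coeff_X, a, b, c2] at this ⊢
    rw [this]
    norm_num
end

section
/- For every integer m ≥ 1, the following identity holds in ℤ⟦X⟧: (Σ_{n≥0} g_n X^n) · ((1 − F_{m−1}·X)·(1 − F_{m+1}·X) − F_m²·X²) = 1 − F_{m+1}·X, where g_0 = 1 and g_n = F_{mn−1} for n ≥ 1. (Equivalently, 1 + Σ_{n≥1} F_{mn−1} x^n = (1 − F_{m−1}x − F_m² x²/(1 − F_{m+1}x))^{−1}.) -/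
open PowerSeries

lemma fib_key_int (j k : ℕ) :
    (Nat.fib (k + 2 * (j + 1)) : ℤ)
      = ((Nat.fib j : ℤ) + Nat.fib (j + 2)) * Nat.fib (k + (j + 1))
        - ((Nat.fib j : ℤ) * Nat.fib (j + 2) - (Nat.fib (j + 1) : ℤ) ^ 2) * Nat.fib k := by
  have h1 : (Nat.fib (k + (j + 1)) : ℤ)
      = Nat.fib k * Nat.fib j + Nat.fib (k + 1) * Nat.fib (j + 1) := by
    have := Nat.fib_add k j
    rw [show k + (j + 1) = k + j + 1 by ring]
    exact_mod_cast this
  have h2 : (Nat.fib (k + (j + 1) + 1) : ℤ)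
      = Nat.fib k * Nat.fib (j + 1) + Nat.fib (k + 1) * Nat.fib (j + 2) := by
    have := Nat.fib_add k (j + 1)
    exact_mod_cast this
  have h3 : (Nat.fib (k + 2 * (j + 1)) : ℤ)
      = Nat.fib (k + (j + 1)) * Nat.fib j + Nat.fib (k + (j + 1) + 1) * Nat.fib (j + 1) := by
    have := Nat.fib_add (k + (j + 1)) j
    rw [show k + 2 * (j + 1) = k + (j + 1) + j + 1 by ring]
    exact_mod_cast this
  rw [h3, h1, h2]; ring

theorem fib_multisection_gf_m_m2 (m : ℕ) (hm : 1 ≤ m) (g : ℕ → ℤ)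
    (hg0 : g 0 = 1) (hg : ∀ n, 1 ≤ n → g n = Nat.fib (m * n - 1)) :
    (PowerSeries.mk g) *
        ((1 - C (R := ℤ) (Nat.fib (m - 1)) * X) * (1 - C (R := ℤ) (Nat.fib (m + 1)) * X) -
          C (R := ℤ) ((Nat.fib m : ℤ) ^ 2) * X ^ 2) =
      1 - C (R := ℤ) (Nat.fib (m + 1)) * X := by
  obtain ⟨j, rfl⟩ : ∃ j, m = j + 1 := ⟨m - 1, by omega⟩
  obtain ⟨s, hs⟩ : ∃ s : ℤ, (Nat.fib j : ℤ) + Nat.fib (j + 2) = s := ⟨_, rfl⟩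
  obtain ⟨t, ht⟩ : ∃ t : ℤ, (Nat.fib j : ℤ) * Nat.fib (j + 2) - (Nat.fib (j + 1) : ℤ) ^ 2 = t :=
    ⟨_, rfl⟩
  have hQ : ((1 - C (R := ℤ) (Nat.fib (j + 1 - 1)) * X) * (1 - C (R := ℤ) (Nat.fib (j + 1 + 1)) * X) -
          C (R := ℤ) ((Nat.fib (j + 1) : ℤ) ^ 2) * X ^ 2)
      = 1 - C (R := ℤ) s * X + C (R := ℤ) t * X ^ 2 := by
    rw [show j + 1 - 1 = j from rfl, show j + 1 + 1 = j + 2 from rfl, ← hs, ← ht, map_add,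
      map_sub, map_mul]
    ring
  rw [hQ]
  have expand : (PowerSeries.mk g) * (1 - C (R := ℤ) s * X + C (R := ℤ) t * X ^ 2)
      = PowerSeries.mk g - C (R := ℤ) s * (PowerSeries.mk g * X)
        + C (R := ℤ) t * ((PowerSeries.mk g * X) * X) := by ring
  rw [expand]
  ext n
  simp only [map_sub, map_add, coeff_C_mul, coeff_one]
  match n with
  | 0 =>
    simp [hg0]
  | 1 =>
    have h1 : g 1 = Nat.fib ((j + 1) * 1 - 1) := hg 1 le_rfl
    rw [show (j + 1) * 1 - 1 = j by omega] at h1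
    simp [h1, hg0, coeff_succ_mul_X, ← hs]
  | (n + 2) =>
    have hgn2 : g (n + 2) = Nat.fib ((j + 1) * (n + 2) - 1) := hg _ (by omega)
    have hgn1 : g (n + 1) = Nat.fib ((j + 1) * (n + 1) - 1) := hg _ (by omega)
    simp only [coeff_succ_mul_X, coeff_mk, coeff_X, coeff_C]
    rw [hgn2, hgn1]
    rcases Nat.eq_zero_or_pos n with rfl | hn
    · have key : (Nat.fib (2 * (j + 1) - 1) : ℤ)
          = (Nat.fib j : ℤ) ^ 2 + (Nat.fib (j + 1) : ℤ) ^ 2 := by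
        have := Nat.fib_two_mul_add_one j
        rw [show 2 * (j + 1) - 1 = 2 * j + 1 by omega]
        push_cast [this]
        ring
      rw [show (j + 1) * (0 + 2) - 1 = 2 * (j + 1) - 1 by omega,
        show (j + 1) * (0 + 1) - 1 = j by omega, key, hg0]
      simp only [← hs, ← ht]
      push_cast
      ring_nf
    · have hgn : g n = Nat.fib ((j + 1) * n - 1) := hg n hn
      rw [hgn]
      have hmn : 1 ≤ (j + 1) * n := Nat.one_le_iff_ne_zero.mpr (by positivity)
      have e1 : (j + 1) * (n + 2) = (j + 1) * n + 2 * j + 2 := by ring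
      have e2 : (j + 1) * (n + 1) = (j + 1) * n + j + 1 := by ring
      rw [show (j + 1) * (n + 2) - 1 = ((j + 1) * n - 1) + 2 * (j + 1) by omega,
        show (j + 1) * (n + 1) - 1 = ((j + 1) * n - 1) + (j + 1) by omega,
        fib_key_int j ((j + 1) * n - 1), hs, ht]
      simp
end

section
/- Fix an integer k ≥ 1, and let d : ℕ → ℤ be the sequence determined by the formal power series equation (1 − 3X + X² + X^k) · (Σ_{n≥0} d_n X^n) = X^k in ℤ⟦X⟧. Then for every n ≥ 1, the sum over all compositions (a_1, …, a_{k'}) of n of the products d_{a_1} d_{a_2} ⋯ d_{a_{k'}} equals F_{2n−2k+2} if n ≥ k, and equals 0 if 1 ≤ n < k. -/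
set_option maxHeartbeats 1000000

open PowerSeries

section Aux

lemma aux_cons_headI_tail {l : List ℕ} (h : l ≠ []) : l.headI :: l.tail = l := by
  cases l with
  | nil => exact absurd rfl h
  | cons a t => rfl

lemma aux_headI_mem {l : List ℕ} (h : l ≠ []) : l.headI ∈ l := by
  cases l with
  | nil => exact absurd rfl h
  | cons a t => exact List.mem_cons_self

lemma aux_sum_headI_tail {l : List ℕ} (h : l ≠ []) : l.headI + l.tail.sum = l.sum := by
  cases l with
  | nil => exact absurd rfl h
  | cons a t => simp

lemma aux_blocks_ne_nil {n : ℕ} (c : Composition (n + 1)) : c.blocks ≠ [] := by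
  intro h
  have hs := c.blocks_sum
  rw [h] at hs
  simp at hs

lemma aux_one_le_headI {n : ℕ} (c : Composition (n + 1)) : 1 ≤ c.blocks.headI :=
  c.one_le_blocks (aux_headI_mem (aux_blocks_ne_nil c))

lemma aux_headI_le {n : ℕ} (c : Composition (n + 1)) : c.blocks.headI ≤ n + 1 := by
  have := aux_sum_headI_tail (aux_blocks_ne_nil c)
  rw [c.blocks_sum] at this
  omega

lemma aux_comp_heq {m₁ m₂ : ℕ} (h : m₁ = m₂) (c₁ : Composition m₁) (c₂ : Composition m₂)
    (hb : c₁.blocks = c₂.blocks) : HEq c₁ c₂ := by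
  subst h
  rw [heq_iff_eq]
  exact Composition.ext hb

/-- Pop the first block of a composition of `n+1`. -/
def popComp {n : ℕ} (c : Composition (n + 1)) : Σ j : ℕ, Composition (n - j) :=
  ⟨c.blocks.headI - 1,
   ⟨c.blocks.tail,
    fun hi => c.blocks_pos (List.mem_of_mem_tail hi),
    by
      have h1 := aux_one_le_headI c
      have h2 := aux_sum_headI_tail (aux_blocks_ne_nil c)
      rw [c.blocks_sum] at h2
      omega⟩⟩

/-- Prepend a block of size `j+1` to a composition of `n - j` (for `j ≤ n`). -/
def consComp {n : ℕ} (j : ℕ) (hj : j ≤ n) (c : Composition (n - j)) : Composition (n + 1) :=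
  ⟨(j + 1) :: c.blocks,
   fun hi => by
     rcases List.mem_cons.1 hi with h | h
     · omega
     · exact c.blocks_pos h,
   by
     have := c.blocks_sum
     simp only [List.sum_cons, this]
     omega⟩

/-- First-block recursion for sums over compositions. -/
lemma comp_rec (d : ℕ → ℤ) (n : ℕ) :
    (∑ c : Composition (n + 1), (c.blocks.map d).prod)
      = ∑ j ∈ Finset.range (n + 1), d (j + 1) *
          ∑ c : Composition (n - j), (c.blocks.map d).prod := by
  simp_rw [Finset.mul_sum]
  rw [Finset.sum_sigma']
  refine Finset.sum_bij' (fun c _ => popComp c)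
    (fun x hx => consComp x.1 (by
      have := (Finset.mem_sigma.1 hx).1
      simp only [Finset.mem_range] at this
      omega) x.2)
    (fun c _ => ?_) (fun x hx => Finset.mem_univ _) (fun c _ => ?_) (fun x hx => ?_)
    (fun c _ => ?_)
  · -- popComp c ∈ sigma finset
    refine Finset.mem_sigma.2 ⟨?_, Finset.mem_univ _⟩
    simp only [popComp, Finset.mem_range]
    have := aux_headI_le c
    omega
  · -- left inverse : consComp (popComp c) = c
    apply Composition.ext
    simp only [consComp, popComp]
    have h1 := aux_one_le_headI c
    have h2 : c.blocks.headI - 1 + 1 = c.blocks.headI := by omega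
    rw [h2]
    exact aux_cons_headI_tail (aux_blocks_ne_nil c)
  · -- right inverse : popComp (consComp x) = x
    obtain ⟨j, c⟩ := x
    refine Sigma.ext ?_ ?_
    · simp [popComp, consComp]
    · apply aux_comp_heq
      · simp [popComp, consComp]
      · simp [popComp, consComp]
  · -- values agree
    simp only [popComp]
    have h1 := aux_one_le_headI c
    have h2 : c.blocks.headI - 1 + 1 = c.blocks.headI := by omega
    rw [h2]
    conv_lhs => rw [← aux_cons_headI_tail (aux_blocks_ne_nil c)]
    simp

lemma fib_jump (t : ℕ) : Nat.fib (t + 4) + Nat.fib t = 3 * Nat.fib (t + 2) := by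
  have h1 : Nat.fib (t + 4) = Nat.fib (t + 2) + Nat.fib (t + 3) := by
    rw [show t + 4 = (t + 2) + 2 by omega, Nat.fib_add_two, show t + 2 + 1 = t + 3 by omega]
  have h2 : Nat.fib (t + 3) = Nat.fib (t + 1) + Nat.fib (t + 2) := by
    rw [show t + 3 = (t + 1) + 2 by omega, Nat.fib_add_two, show t + 1 + 1 = t + 2 by omega]
  have h3 : Nat.fib (t + 2) = Nat.fib t + Nat.fib (t + 1) := Nat.fib_add_two
  omega

end Aux

theorem sum_over_compositions_bisection_prime_gf
    (k : ℕ) (hk : 1 ≤ k) (d : ℕ → ℤ)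
    (hd : (1 - 3 * X + X ^ 2 + X ^ k : PowerSeries ℤ) * PowerSeries.mk d = X ^ k)
    (n : ℕ) (hn : 1 ≤ n) :
    ∑ comp : Composition n, (comp.blocks.map d).prod =
      if k ≤ n then (Nat.fib (2 * n - 2 * k + 2) : ℤ) else 0 := by
  set T : ℕ → ℤ := fun m => ∑ c : Composition m, ((c.blocks.map d).prod) with hT
  -- T 0 = 1
  have hblocks0 : ∀ c : Composition 0, c.blocks = [] := by
    intro c
    cases hc : c.blocks with
    | nil => rfl
    | cons a l =>
      exfalso
      have hs := c.blocks_sum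
      rw [hc] at hs
      have ha : 0 < a := c.blocks_pos (by rw [hc]; exact List.mem_cons_self)
      simp only [List.sum_cons] at hs
      omega
  have hT0 : T 0 = 1 := by
    have h : ∀ c : Composition 0, (List.map d c.blocks).prod = 1 := by
      intro c; rw [hblocks0 c]; rfl
    simp only [hT]
    rw [Finset.sum_congr rfl (fun c _ => h c)]
    simp [Finset.card_univ, composition_card]
  -- d 0 = 0
  have d0 : d 0 = 0 := by
    have h := congrArg (PowerSeries.constantCoeff) hd
    simp only [map_mul, map_add, map_sub, map_pow, map_one, constantCoeff_X,
      constantCoeff_mk] at h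
    rw [zero_pow (by omega : k ≠ 0)] at h
    simpa using h
  -- (1 - mk d) * mk T = 1
  have h1 : (1 - PowerSeries.mk d) * PowerSeries.mk T = 1 := by
    ext m
    cases m with
    | zero =>
      simp only [coeff_zero_eq_constantCoeff, map_mul, map_sub, map_one, constantCoeff_mk,
        d0, sub_zero, one_mul, hT0]
    | succ m =>
      rw [sub_mul, one_mul, map_sub]
      have hmul : (PowerSeries.coeff (m + 1)) (PowerSeries.mk d * PowerSeries.mk T)
          = ∑ i ∈ Finset.range (m + 1 + 1), d i * T (m + 1 - i) := by
        rw [PowerSeries.coeff_mul, Finset.Nat.sum_antidiagonal_eq_sum_range_succ_mk]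
        simp [coeff_mk]
      rw [hmul, Finset.sum_range_succ']
      simp only [d0, zero_mul, add_zero, Nat.add_sub_add_right, Nat.sub_zero]
      rw [coeff_mk]
      simp only [hT]
      rw [comp_rec d m]
      have hone : (PowerSeries.coeff (m + 1)) (1 : PowerSeries ℤ) = 0 := by
        rw [PowerSeries.coeff_one]; simp
      rw [hone, sub_self]
  -- (1 - 3X + X²)(mk T - 1) = X^k
  have h2 : ((1 : PowerSeries ℤ) - 3 * X + X ^ 2) * (PowerSeries.mk T - 1) = X ^ k := by
    linear_combination (PowerSeries.mk T) * hd + ((X : PowerSeries ℤ) ^ k + 1 - 3 * X + X ^ 2) * h1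
  have h2' : (PowerSeries.mk T - 1) - (X * (PowerSeries.mk T - 1) + X * (PowerSeries.mk T - 1)
      + X * (PowerSeries.mk T - 1)) + X * (X * (PowerSeries.mk T - 1)) = (X : PowerSeries ℤ) ^ k := by
    linear_combination h2
  set u : ℕ → ℤ := fun m => PowerSeries.coeff m (PowerSeries.mk T - 1) with hu
  have hu0 : u 0 = 0 := by
    simp [hu, coeff_mk, hT0]
  have huT : ∀ m, 1 ≤ m → u m = T m := by
    intro m hm
    simp only [hu, map_sub, coeff_mk]
    rw [PowerSeries.coeff_one]
    have : m ≠ 0 := by omega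
    simp [this]
  have hrec : ∀ m, u (m + 2) - 3 * u (m + 1) + u m = if m + 2 = k then 1 else 0 := by
    intro m
    have h := congrArg (PowerSeries.coeff (m + 2)) h2'
    rw [show m + 2 = (m + 1) + 1 by omega] at h
    rw [map_add, map_sub, map_add, map_add] at h
    simp only [PowerSeries.coeff_succ_X_mul] at h
    rw [PowerSeries.coeff_X_pow] at h
    have hgoal : u (m + 2) = PowerSeries.coeff ((m + 1) + 1) (PowerSeries.mk T - 1) := by
      rw [hu, show (m + 1) + 1 = m + 2 by omega]
    have hg1 : u (m + 1) = PowerSeries.coeff (m + 1) (PowerSeries.mk T - 1) := by rw [hu]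
    have hg0 : u m = PowerSeries.coeff m (PowerSeries.mk T - 1) := by rw [hu]
    rw [hgoal, hg1, hg0, show m + 2 = (m + 1) + 1 by omega]
    rcases eq_or_ne ((m + 1) + 1) k with hc | hc <;> simp only [hc, if_true, if_false] at h ⊢ <;>
      linarith [h]
  have hu1 : u 1 = if 1 = k then 1 else 0 := by
    have h := congrArg (PowerSeries.coeff 1) h2'
    rw [show (1 : ℕ) = 0 + 1 by omega] at h
    rw [map_add, map_sub, map_add, map_add] at h
    simp only [PowerSeries.coeff_succ_X_mul, PowerSeries.coeff_zero_X_mul] at h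
    rw [PowerSeries.coeff_X_pow] at h
    have hg1 : u 1 = PowerSeries.coeff (0 + 1) (PowerSeries.mk T - 1) := by
      rw [hu, show (0 : ℕ) + 1 = 1 by omega]
    have hg0 : PowerSeries.coeff 0 (PowerSeries.mk T - 1) = u 0 := by rw [hu]
    rw [hg0, hu0] at h
    rw [hg1, show (0 : ℕ) + 1 = 1 by omega] at *
    by_cases hc : (1 : ℕ) = k
    · rw [if_pos hc] at h ⊢
      linarith [h]
    · rw [if_neg hc] at h ⊢
      linarith [h]
  set g : ℕ → ℤ := fun m => if k ≤ m then (Nat.fib (2 * m - 2 * k + 2) : ℤ) else 0 with hg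
  have key : ∀ m, u m = g m ∧ u (m + 1) = g (m + 1) := by
    intro m
    induction m with
    | zero =>
      constructor
      · rw [hu0, hg]; simp [Nat.not_succ_le_zero]; omega
      · rw [hu1, hg]
        rcases eq_or_ne k 1 with h | h
        · subst h; norm_num
        · have : ¬ k ≤ 1 := by omega
          simp [this, h, Ne.symm h]
    | succ m ih =>
      obtain ⟨ihm, ihm1⟩ := ih
      refine ⟨ihm1, ?_⟩
      rw [show m + 1 + 1 = m + 2 by omega]
      have hr := hrec m
      rw [ihm, ihm1] at hr
      have hval : u (m + 2) = 3 * g (m + 1) - g m + (if m + 2 = k then 1 else 0) := by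
        linarith [hr]
      rw [hval, hg]
      rcases le_or_gt k m with hkm | hkm
      · -- k ≤ m
        have e1 : k ≤ m + 1 := by omega
        have e2 : k ≤ m + 2 := by omega
        have e3 : m + 2 ≠ k := by omega
        simp only [hkm, e1, e2, e3, if_true, if_false]
        set a := m - k with ha
        have f1 : 2 * (m + 2) - 2 * k + 2 = 2 * a + 6 := by omega
        have f2 : 2 * (m + 1) - 2 * k + 2 = 2 * a + 4 := by omega
        have f3 : 2 * m - 2 * k + 2 = 2 * a + 2 := by omega
        rw [f1, f2, f3]
        have := fib_jump (2 * a + 2)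
        have hcast : (Nat.fib (2 * a + 6) : ℤ) + Nat.fib (2 * a + 2)
            = 3 * Nat.fib (2 * a + 4) := by exact_mod_cast this
        linarith
      · rcases eq_or_lt_of_le (Nat.succ_le_of_lt hkm) with hk1 | hk1
        · -- k = m + 1
          have e0 : ¬ k ≤ m := by omega
          have e1 : k ≤ m + 1 := by omega
          have e2 : k ≤ m + 2 := by omega
          have e3 : m + 2 ≠ k := by omega
          simp only [e0, e1, e2, e3, if_true, if_false]
          have f1 : 2 * (m + 2) - 2 * k + 2 = 4 := by omega
          have f2 : 2 * (m + 1) - 2 * k + 2 = 2 := by omega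
          rw [f1, f2]
          norm_num [Nat.fib_two]
        · rcases eq_or_lt_of_le (Nat.succ_le_of_lt hk1) with hk2 | hk2
          · -- k = m + 2
            have e0 : ¬ k ≤ m := by omega
            have e1 : ¬ k ≤ m + 1 := by omega
            have e2 : k ≤ m + 2 := by omega
            have e3 : m + 2 = k := by omega
            have f1 : 2 * (m + 2) - 2 * k + 2 = 2 := by omega
            have f1' : 2 * k - 2 * k + 2 = 2 := by omega
            simp only [e0, e1, e2, e3, f1, f1', if_true, if_false, le_refl]
            norm_num [Nat.fib_two]
          · -- k > m + 2
            have e0 : ¬ k ≤ m := by omega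
            have e1 : ¬ k ≤ m + 1 := by omega
            have e2 : ¬ k ≤ m + 2 := by omega
            have e3 : m + 2 ≠ k := by omega
            simp [e0, e1, e2, e3]
  have final : T n = g n := by
    rw [← huT n hn]
    exact (key n).1
  rw [hT] at final
  simp only at final
  rw [final, hg]
end

section
/- For every integer n ≥ 1, the number of compositions of n all of whose parts are odd is equal to the Fibonacci number F_n. -/
/-- Lists of odd numbers summing to `n`. -/
abbrev OddList (n : ℕ) := {l : List ℕ // l.sum = n ∧ ∀ a ∈ l, Odd a}

def oddCompEquiv (n : ℕ) :
    {c : Composition n // ∀ a ∈ c.blocks, Odd a} ≃ OddList n where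
  toFun c := ⟨c.1.blocks, c.1.blocks_sum, c.2⟩
  invFun l := ⟨⟨l.1, fun hi => (l.2.2 _ hi).pos, l.2.1⟩, l.2.2⟩
  left_inv c := rfl
  right_inv l := rfl

instance (n : ℕ) : Finite (OddList n) :=
  Finite.of_equiv _ (oddCompEquiv n)

lemma odd_sum_zero {l : List ℕ} (hs : l.sum = 0) (ho : ∀ a ∈ l, Odd a) : l = [] := by
  cases l with
  | nil => rfl
  | cons a t =>
    exfalso
    have ha := (ho a (by simp)).pos
    simp [List.sum_cons] at hs
    omega

lemma odd_sum_one {l : List ℕ} (hs : l.sum = 1) (ho : ∀ a ∈ l, Odd a) : l = [1] := by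
  cases l with
  | nil => simp at hs
  | cons a t =>
    have ha := (ho a (by simp)).pos
    simp [List.sum_cons] at hs
    have ha1 : a = 1 := by omega
    have ht : t.sum = 0 := by omega
    have := odd_sum_zero ht (fun b hb => ho b (by simp [hb]))
    simp [ha1, this]

lemma odd_sum_two {l : List ℕ} (hs : l.sum = 2) (ho : ∀ a ∈ l, Odd a) : l = [1, 1] := by
  cases l with
  | nil => simp at hs
  | cons a t =>
    have ha := ho a (by simp)
    have ha' := ha.pos
    simp [List.sum_cons] at hs
    have ha2 : a ≠ 2 := by rintro rfl; exact absurd ha (by decide)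
    have ha1 : a = 1 := by omega
    have ht : t.sum = 1 := by omega
    have := odd_sum_one ht (fun b hb => ho b (by simp [hb]))
    simp [ha1, this]

def addTwo : List ℕ → List ℕ
  | [] => []
  | a :: t => (a + 2) :: t

lemma card_oddList_one : Nat.card (OddList 1) = 1 := by
  rw [Nat.card_eq_one_iff_unique]
  constructor
  · constructor
    intro x y
    apply Subtype.ext
    rw [odd_sum_one x.2.1 x.2.2, odd_sum_one y.2.1 y.2.2]
  · exact ⟨⟨[1], by simp⟩⟩

lemma card_oddList_two : Nat.card (OddList 2) = 1 := by
  rw [Nat.card_eq_one_iff_unique]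
  constructor
  · constructor
    intro x y
    apply Subtype.ext
    rw [odd_sum_two x.2.1 x.2.2, odd_sum_two y.2.1 y.2.2]
  · exact ⟨⟨[1, 1], by norm_num⟩⟩

lemma card_oddList_rec (n : ℕ) (hn : 1 ≤ n) :
    Nat.card (OddList (n + 2)) = Nat.card (OddList (n + 1)) + Nat.card (OddList n) := by
  classical
  have key : Nat.card (OddList (n + 1) ⊕ OddList n) = Nat.card (OddList (n + 2)) := by
    apply Nat.card_eq_of_bijective (f := fun x =>
      match x with
      | Sum.inl l => (⟨1 :: l.1, by rw [List.sum_cons, l.2.1]; omega, by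
          intro a ha
          rcases List.mem_cons.1 ha with h | h
          · exact h ▸ odd_one
          · exact l.2.2 a h⟩ : OddList (n + 2))
      | Sum.inr l => (⟨addTwo l.1, by
          obtain ⟨l, hs, ho⟩ := l
          cases l with
          | nil => simp at hs; omega
          | cons a t => simp [addTwo, List.sum_cons] at hs ⊢; omega, by
          obtain ⟨l, hs, ho⟩ := l
          cases l with
          | nil => simp [addTwo]
          | cons a t =>
            intro b hb
            rcases List.mem_cons.1 hb with h | h
            · obtain ⟨k, hk⟩ := ho a (by simp)
              exact ⟨k + 1, by omega⟩
            · exact ho b (by simp [h])⟩ : OddList (n + 2)))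
    constructor
    · rintro (x | x) (y | y) hxy <;> simp only [Subtype.mk.injEq] at hxy
      · obtain ⟨x, hx⟩ := x; obtain ⟨y, hy⟩ := y
        simp_all
      · obtain ⟨x, hx⟩ := x; obtain ⟨y, hys, hyo⟩ := y
        exfalso
        cases y with
        | nil => simp at hys; omega
        | cons a t => simp [addTwo] at hxy
      · obtain ⟨x, hxs, hxo⟩ := x; obtain ⟨y, hy⟩ := y
        exfalso
        cases x with
        | nil => simp at hxs; omega
        | cons a t => simp [addTwo] at hxy
      · obtain ⟨x, hxs, hxo⟩ := x; obtain ⟨y, hys, hyo⟩ := y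
        cases x with
        | nil => simp at hxs; omega
        | cons a t =>
          cases y with
          | nil => simp at hys; omega
          | cons b s =>
            simp [addTwo] at hxy
            simp_all
    · rintro ⟨m, hms, hmo⟩
      cases m with
      | nil => simp at hms
      | cons a t =>
        have ha := hmo a (by simp)
        simp [List.sum_cons] at hms
        by_cases h1 : a = 1
        · refine ⟨Sum.inl ⟨t, by omega, fun b hb => hmo b (by simp [hb])⟩, ?_⟩
          simp [h1]
        · have ha3 : 3 ≤ a := by
            rcases ha with ⟨k, hk⟩; omega
          refine ⟨Sum.inr ⟨(a - 2) :: t, by simp [List.sum_cons]; omega, ?_⟩, ?_⟩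
          · intro b hb
            rcases List.mem_cons.1 hb with h | h
            · obtain ⟨k, hk⟩ := ha
              exact ⟨k - 1, by omega⟩
            · exact hmo b (by simp [h])
          · apply Subtype.ext
            simp [addTwo]
            omega
  rw [← key, Nat.card_sum]

lemma card_oddList_fib : ∀ n : ℕ,
    Nat.card (OddList (n + 1)) = Nat.fib (n + 1) ∧
    Nat.card (OddList (n + 2)) = Nat.fib (n + 2)
  | 0 => ⟨by simpa using card_oddList_one, by simpa using card_oddList_two⟩
  | n + 1 => ⟨(card_oddList_fib n).2, by
      rw [card_oddList_rec (n + 1) (by omega), (card_oddList_fib n).2,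
        (card_oddList_fib n).1, Nat.fib_add_two (n := n + 1)]
      exact Nat.add_comm _ _⟩

theorem card_compositions_odd_parts (n : ℕ) (hn : 1 ≤ n) :
    Nat.card {c : Composition n // ∀ a ∈ c.blocks, Odd a} = Nat.fib n := by
  rw [Nat.card_congr (oddCompEquiv n)]
  obtain ⟨m, rfl⟩ : ∃ m, n = m + 1 := ⟨n - 1, by omega⟩
  exact (card_oddList_fib m).1
end

section
/- For every integer n ≥ 1, F_{2n} equals the sum, over all compositions (a_1, …, a_k) of n, of the products a_1 a_2 ⋯ a_k. -/
namespace FibComp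

lemma headI_cons_tail (l : List ℕ) (h : l ≠ []) : l.headI :: l.tail = l := by
  cases l with
  | nil => exact absurd rfl h
  | cons a t => rfl

lemma blocks_ne_nil {n : ℕ} (hn : 0 < n) (c : Composition n) : c.blocks ≠ [] := by
  intro h
  have := c.blocks_sum
  rw [h] at this
  simp at this
  omega

lemma headI_pos {n : ℕ} (hn : 0 < n) (c : Composition n) : 0 < c.blocks.headI := by
  cases hb : c.blocks with
  | nil => exact absurd hb (blocks_ne_nil hn c)
  | cons a t =>
    have ha : a ∈ c.blocks := by rw [hb]; exact List.mem_cons_self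
    simpa using c.blocks_pos ha

def splitEquiv (n : ℕ) (hn : 0 < n) : Composition (n + 1) ≃ Composition n ⊕ Composition n where
  toFun d :=
    if h1 : d.blocks.headI = 1 then
      Sum.inl ⟨d.blocks.tail,
        fun hi => d.blocks_pos (List.mem_of_mem_tail hi),
        by
          have h := headI_cons_tail d.blocks (blocks_ne_nil (Nat.succ_pos n) d)
          have hs := d.blocks_sum
          rw [← h, List.sum_cons, h1] at hs
          omega⟩
    else
      Sum.inr ⟨(d.blocks.headI - 1) :: d.blocks.tail,
        by
          intro i hi
          rcases List.mem_cons.mp hi with h | h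
          · have := headI_pos (Nat.succ_pos n) d
            omega
          · exact d.blocks_pos (List.mem_of_mem_tail h),
        by
          have h := headI_cons_tail d.blocks (blocks_ne_nil (Nat.succ_pos n) d)
          have hs := d.blocks_sum
          rw [← h, List.sum_cons] at hs
          have := headI_pos (Nat.succ_pos n) d
          simp only [List.sum_cons]
          omega⟩
  invFun x :=
    match x with
    | Sum.inl c => ⟨1 :: c.blocks,
        by
          intro i hi
          rcases List.mem_cons.mp hi with h | h
          · omega
          · exact c.blocks_pos h,
        by rw [List.sum_cons, c.blocks_sum, Nat.add_comm]⟩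
    | Sum.inr c => ⟨(c.blocks.headI + 1) :: c.blocks.tail,
        by
          intro i hi
          rcases List.mem_cons.mp hi with h | h
          · omega
          · exact c.blocks_pos (List.mem_of_mem_tail h),
        by
          have h := headI_cons_tail c.blocks (blocks_ne_nil hn c)
          have hs := c.blocks_sum
          rw [← h, List.sum_cons] at hs
          simp only [List.sum_cons]
          omega⟩
  left_inv d := by
    have h := headI_cons_tail d.blocks (blocks_ne_nil (Nat.succ_pos n) d)
    by_cases h1 : d.blocks.headI = 1
    · dsimp only
      rw [dif_pos h1]
      apply Composition.ext
      show 1 :: d.blocks.tail = d.blocks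
      rw [h1] at h; exact h
    · dsimp only
      rw [dif_neg h1]
      apply Composition.ext
      show (((d.blocks.headI - 1) :: d.blocks.tail : List ℕ).headI + 1)
          :: ((d.blocks.headI - 1) :: d.blocks.tail : List ℕ).tail = d.blocks
      simp only [List.headI_cons, List.tail_cons]
      have hp := headI_pos (Nat.succ_pos n) d
      have h2 : d.blocks.headI - 1 + 1 = d.blocks.headI := by omega
      rw [h2]; exact h
  right_inv x := by
    rcases x with c | c
    · show (if h1 : (1 :: c.blocks : List ℕ).headI = 1 then _ else _) = Sum.inl c
      rw [dif_pos (show (1 :: c.blocks : List ℕ).headI = 1 from rfl)]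
      congr 1
    · have hp := headI_pos hn c
      show (if h1 : ((c.blocks.headI + 1) :: c.blocks.tail : List ℕ).headI = 1
            then _ else _) = Sum.inr c
      rw [dif_neg (show ((c.blocks.headI + 1) :: c.blocks.tail : List ℕ).headI ≠ 1 by
        simp only [List.headI_cons]; omega)]
      congr 1
      apply Composition.ext
      show (((c.blocks.headI + 1) :: c.blocks.tail : List ℕ).headI - 1)
          :: ((c.blocks.headI + 1) :: c.blocks.tail : List ℕ).tail = c.blocks
      simp only [List.headI_cons, List.tail_cons, Nat.add_sub_cancel]
      exact headI_cons_tail c.blocks (blocks_ne_nil hn c)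

lemma splitEquiv_symm_inl_blocks (n : ℕ) (hn : 0 < n) (c : Composition n) :
    ((splitEquiv n hn).symm (Sum.inl c)).blocks = 1 :: c.blocks := rfl

lemma splitEquiv_symm_inr_blocks (n : ℕ) (hn : 0 < n) (c : Composition n) :
    ((splitEquiv n hn).symm (Sum.inr c)).blocks = (c.blocks.headI + 1) :: c.blocks.tail := rfl

noncomputable def S (n : ℕ) : ℕ := ∑ c : Composition n, c.blocks.prod
noncomputable def T (n : ℕ) : ℕ := ∑ c : Composition n, c.blocks.tail.prod

lemma blocks_of_one (c : Composition 1) : c.blocks = [1] := by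
  have h1 : c.length ≤ 1 := c.length_le
  have h2 : 0 < c.length := c.length_pos_of_pos one_pos
  have : c = Composition.ones 1 := Composition.eq_ones_iff_length.mpr (by omega)
  rw [this, Composition.ones_blocks]
  rfl

lemma S_one : S 1 = 1 := by
  unfold S
  rw [Finset.sum_congr rfl (fun c _ => by rw [blocks_of_one c])]
  simp [composition_card]

lemma T_one : T 1 = 1 := by
  unfold T
  rw [Finset.sum_congr rfl (fun c _ => by rw [blocks_of_one c])]
  simp [composition_card]

lemma sum_split (n : ℕ) (hn : 0 < n) (f : List ℕ → ℕ) :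
    ∑ d : Composition (n + 1), f d.blocks =
      (∑ c : Composition n, f (1 :: c.blocks)) +
      ∑ c : Composition n, f ((c.blocks.headI + 1) :: c.blocks.tail) := by
  have h := Fintype.sum_equiv (splitEquiv n hn) (fun d => f d.blocks)
    (fun x => f ((splitEquiv n hn).symm x).blocks)
    (fun d => by simp)
  rw [h, Fintype.sum_sum_type]
  simp only [splitEquiv_symm_inl_blocks, splitEquiv_symm_inr_blocks]

lemma S_succ (n : ℕ) (hn : 0 < n) : S (n + 1) = 2 * S n + T n := by
  have h := sum_split n hn (fun l => l.prod)
  unfold S T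
  rw [h]
  simp only [List.prod_cons, one_mul, add_mul]
  rw [Finset.sum_add_distrib]
  have key : ∀ c : Composition n, c.blocks.headI * c.blocks.tail.prod = c.blocks.prod := by
    intro c
    conv_rhs => rw [← headI_cons_tail c.blocks (blocks_ne_nil hn c)]
    rw [List.prod_cons]
  rw [Finset.sum_congr rfl (fun c _ => key c)]
  ring

lemma T_succ (n : ℕ) (hn : 0 < n) : T (n + 1) = S n + T n := by
  have h := sum_split n hn (fun l => l.tail.prod)
  unfold S T
  rw [h]
  simp

lemma main (n : ℕ) (hn : 0 < n) : S n = Nat.fib (2 * n) ∧ T n = Nat.fib (2 * n - 1) := by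
  induction n with
  | zero => omega
  | succ m ih =>
    rcases Nat.eq_zero_or_pos m with hm | hm
    · subst hm
      constructor
      · rw [S_one]; rfl
      · rw [T_one]; rfl
    · obtain ⟨hS, hT⟩ := ih hm
      constructor
      · rw [S_succ m hm, hS, hT]
        have h1 : 2 * (m + 1) = 2 * m + 2 := by ring
        rw [h1, Nat.fib_add_two]
        have h2 : 2 * m = (2 * m - 1) + 1 := by omega
        rw [show Nat.fib (2 * m + 1) = Nat.fib (2 * m) + Nat.fib (2 * m - 1) by
          rw [h2, Nat.fib_add_two, ← h2]; ring]
        ring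
      · rw [T_succ m hm, hS, hT]
        have h1 : 2 * (m + 1) - 1 = 2 * m + 1 := by omega
        have h2 : 2 * m = (2 * m - 1) + 1 := by omega
        rw [h1, h2, Nat.fib_add_two, ← h2]
        ring

end FibComp

theorem fib_two_mul_eq_sum_compositions_prod (n : ℕ) (hn : 1 ≤ n) :
    Nat.fib (2 * n) = ∑ c : Composition n, c.blocks.prod := by
  have h := (FibComp.main n hn).1
  rw [← h]
  rfl
end

section
/- For every integer n ≥ 2, F_{n−2} equals the sum, over all compositions (a_1, …, a_k) of n, of the products ⌊(a_1 − 1)/2⌋ ⌊(a_2 − 1)/2⌋ ⋯ ⌊(a_k − 1)/2⌋. -/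
open Finset

namespace FibCompAux

/-- The sum over all compositions of `n` of the product of `(a-1)/2` over blocks. -/
def f (n : ℕ) : ℕ := ∑ c : Composition n, (c.blocks.map fun a => (a - 1) / 2).prod

lemma blocks_ne_nil {n : ℕ} (c : Composition (n + 1)) : c.blocks ≠ [] := by
  intro h
  have := c.blocks_sum
  rw [h] at this
  simp at this

lemma head_pos {n : ℕ} (c : Composition (n + 1)) : 0 < c.blocks.head! :=
  c.blocks_pos (List.head!_mem_self (blocks_ne_nil c))

lemma head_add_tail {n : ℕ} (c : Composition (n + 1)) :
    c.blocks.head! + c.blocks.tail.sum = n + 1 := by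
  have h := List.cons_head!_tail (blocks_ne_nil c)
  have := c.blocks_sum
  rw [← h] at this
  simpa using this

lemma head_le {n : ℕ} (c : Composition (n + 1)) : c.blocks.head! ≤ n + 1 := by
  have := head_add_tail c; omega

/-- Splitting off the first block of a composition of `n+1`. -/
def splitEquiv (n : ℕ) : Composition (n + 1) ≃ Σ a : Fin (n + 1), Composition (n - a) where
  toFun c := ⟨⟨c.blocks.head! - 1, by have := head_pos c; have := head_le c; omega⟩,
    { blocks := c.blocks.tail
      blocks_pos := fun hi => c.blocks_pos (List.mem_of_mem_tail hi)
      blocks_sum := by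
        have h1 := head_add_tail c
        have h2 := head_pos c
        simp only
        omega }⟩
  invFun p :=
    { blocks := ((p.1 : ℕ) + 1) :: p.2.blocks
      blocks_pos := by
        intro i hi
        rcases List.mem_cons.1 hi with h | h
        · omega
        · exact p.2.blocks_pos h
      blocks_sum := by
        have := p.2.blocks_sum
        have := p.1.2
        simp only [List.sum_cons, this]
        omega }
  left_inv c := by
    ext1
    simp only
    have h1 := head_pos c
    have h2 : c.blocks.head! - 1 + 1 = c.blocks.head! := by omega
    rw [h2, List.cons_head!_tail (blocks_ne_nil c)]
  right_inv p := by
    rcases p with ⟨a, c⟩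
    rfl

lemma f_succ (n : ℕ) :
    f (n + 1) = ∑ a ∈ range (n + 1), a / 2 * f (n - a) := by
  have h := Equiv.sum_comp (splitEquiv n).symm
      (fun c : Composition (n + 1) => (c.blocks.map fun a => (a - 1) / 2).prod)
  rw [f, ← h, ← Finset.univ_sigma_univ, Finset.sum_sigma]
  rw [← Fin.sum_univ_eq_sum_range (fun a => a / 2 * f (n - a)) (n + 1)]
  apply Finset.sum_congr rfl
  intro a _
  rw [f, Finset.mul_sum]
  apply Finset.sum_congr rfl
  intro c _
  show ((((a : ℕ) + 1) :: c.blocks).map fun b => (b - 1) / 2).prod = _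
  simp [Nat.add_sub_cancel]

instance : Unique (Composition 0) where
  default :=
    { blocks := []
      blocks_pos := by simp
      blocks_sum := rfl }
  uniq c := by
    ext1
    have hs := c.blocks_sum
    have : c.blocks = [] := by
      cases hb : c.blocks with
      | nil => rfl
      | cons x l =>
        exfalso
        have hx := c.blocks_pos (by rw [hb]; exact List.mem_cons_self)
        rw [hb] at hs
        simp [List.sum_cons] at hs
        omega
    simp [this]

lemma f_zero : f 0 = 1 := by
  rw [f, Fintype.sum_unique]
  rfl

/-- Auxiliary sum for the Fibonacci identity. -/
def S (n : ℕ) : ℕ := ∑ b ∈ range (n + 1), (n - b) / 2 * Nat.fib b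

lemma S_rec (n : ℕ) : S (n + 2) = (n + 1) / 2 + S (n + 1) + S n := by
  have hS2 : S (n + 2) =
      (∑ i ∈ range (n + 1), (n - i) / 2 * Nat.fib (i + 2)) + (n + 1) / 2 := by
    rw [S]
    rw [Finset.sum_range_succ' (fun b => (n + 2 - b) / 2 * Nat.fib b) (n + 2)]
    rw [Finset.sum_range_succ' (fun b => (n + 2 - (b + 1)) / 2 * Nat.fib (b + 1)) (n + 1)]
    have h0 : (n + 2 - 0) / 2 * Nat.fib 0 = 0 := by simp
    have h1 : (n + 2 - (0 + 1)) / 2 * Nat.fib (0 + 1) = (n + 1) / 2 := by simp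
    rw [h0, h1, Nat.add_zero]
    congr 1
    apply Finset.sum_congr rfl
    intro i hi
    have hi' := Finset.mem_range.1 hi
    have hnum : n + 2 - (i + 1 + 1) = n - i := by omega
    have harg : i + 1 + 1 = i + 2 := rfl
    rw [hnum, harg]
  have hsplit : (∑ i ∈ range (n + 1), (n - i) / 2 * Nat.fib (i + 2)) =
      (∑ i ∈ range (n + 1), (n - i) / 2 * Nat.fib (i + 1)) +
        ∑ i ∈ range (n + 1), (n - i) / 2 * Nat.fib i := by
    rw [← Finset.sum_add_distrib]
    apply Finset.sum_congr rfl
    intro i _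
    rw [Nat.fib_add_two, Nat.mul_add]
    omega
  have hS1 : S (n + 1) = ∑ i ∈ range (n + 1), (n - i) / 2 * Nat.fib (i + 1) := by
    rw [S]
    rw [Finset.sum_range_succ' (fun b => (n + 1 - b) / 2 * Nat.fib b) (n + 1)]
    have h0 : (n + 1 - 0) / 2 * Nat.fib 0 = 0 := by simp
    rw [h0, Nat.add_zero]
    apply Finset.sum_congr rfl
    intro i hi
    have := Finset.mem_range.1 hi
    have hnum : n + 1 - (i + 1) = n - i := by omega
    rw [hnum]
  have hSn : S n = ∑ i ∈ range (n + 1), (n - i) / 2 * Nat.fib i := rfl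
  omega

lemma lemB (n : ℕ) : Nat.fib (n + 1) = (n + 2) / 2 + S n := by
  induction n using Nat.twoStepInduction with
  | zero => simp [S]
  | one => simp [S, Finset.sum_range_succ]
  | more n ih1 ih2 =>
    have hr := S_rec n
    show Nat.fib (n + 1 + 2) = _
    rw [Nat.fib_add_two, ih1, ih2]
    omega

lemma f_eq (n : ℕ) : f n = if n = 0 then 1 else Nat.fib (n - 2) := by
  induction n using Nat.strong_induction_on with
  | _ n ih =>
    match n with
    | 0 => simpa using f_zero
    | (m + 1) =>
      rw [f_succ]
      have hc : ∀ a ∈ range (m + 1),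
          a / 2 * f (m - a) = a / 2 * (if m - a = 0 then 1 else Nat.fib (m - a - 2)) := by
        intro a ha
        rw [ih (m - a) (by have := Finset.mem_range.1 ha; omega)]
      rw [Finset.sum_congr rfl hc, if_neg (Nat.succ_ne_zero m)]
      match m with
      | 0 => simp
      | 1 => simp [Finset.sum_range_succ]
      | (k + 2) =>
        have hin : ∀ a ∈ range (k + 2),
            a / 2 * (if k + 2 - a = 0 then 1 else Nat.fib (k + 2 - a - 2)) =
              a / 2 * Nat.fib (k - a) := by
          intro a ha
          have := Finset.mem_range.1 ha
          rw [if_neg (by omega)]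
          congr 2
          omega
        rw [Finset.sum_range_succ, Finset.sum_congr rfl hin, Finset.sum_range_succ]
        have h1 : (k : ℕ) - (k + 1) = 0 := by omega
        rw [h1]
        have hrefl := Finset.sum_range_reflect (fun a => a / 2 * Nat.fib (k - a)) (k + 1)
        have hS : (∑ a ∈ range (k + 1), a / 2 * Nat.fib (k - a)) = S k := by
          rw [← hrefl, S]
          apply Finset.sum_congr rfl
          intro j hj
          have hj' := Finset.mem_range.1 hj
          have h1 : k + 1 - 1 - j = k - j := by omega
          have h2 : k - (k - j) = j := by omega
          rw [h1, h2]
        rw [hS]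
        have := lemB k
        simp only [Nat.fib_zero, Nat.sub_self, if_pos rfl, Nat.succ_sub_succ]
        simp [Nat.fib_zero]
        omega

end FibCompAux

theorem fib_sub_two_eq_sum_compositions_floor (n : ℕ) (hn : 2 ≤ n) :
    Nat.fib (n - 2) =
      ∑ c : Composition n, (c.blocks.map fun a => (a - 1) / 2).prod := by
  have h := FibCompAux.f_eq n
  rw [if_neg (by omega)] at h
  exact h.symm
end
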